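/- arXiv:2004.09549 — 6 statements merged into one kernel-verified Lean document; each statement's English description precedes it below -/
import Mathlib

section
/- (Bounding SER in terms of NMSE.) Let K be a power of 2 and let β ∈ ℂ^{LM} be a valid message vector. Let s ∈ ℂ^{LM} be arbitrary and let τ_1,…,τ_L > 0. Let β^T = η(s,τ) be the soft-decision estimate, and let β̂ ∈ ℂ^{LM} be any hard-decision estimate such that, for each ℓ ∈ [L], β̂_{sec(ℓ)} ∈ B_{M,K} maximizes Re[(s_{sec(ℓ)})* b] over b ∈ B_{M,K}. Then the section error rate SER = (1/L)·Σ_{ℓ=1}^L 1{β̂_{sec(ℓ)} ≠ β_{sec(ℓ)}} satisfies: SER ≤ 4·‖β^T − β‖²/L if K ∈ {1,2,4}, and SER ≤ sin(π/K)^{−4}·‖β^T − β‖²/L if K ≥ 8. -/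
open Finset

noncomputable section

/-- The `k`-th symbol of the K-PSK constellation, `π_k = exp(i·2πk/K)`. -/
def psk (K k : ℕ) : ℂ := Complex.exp (2 * (Real.pi : ℂ) * Complex.I * (k : ℂ) / (K : ℂ))

/-- `B_{M,K}`: vectors in `ℂ^M` with exactly one non-zero entry, whose value is a
`K`-PSK symbol. -/
def BMK (M K : ℕ) : Set (Fin M → ℂ) :=
  {b | ∃ m : Fin M, ∃ k ∈ Finset.Icc 1 K, b = fun m' => if m' = m then psk K k else 0}

/-- `b` is a hard-decision estimate for the section statistic `s`: it lies in `B_{M,K}`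
and maximizes `Re[(s)* b']` over `b' ∈ B_{M,K}`. -/
def IsHardDec (M K : ℕ) (s b : Fin M → ℂ) : Prop :=
  b ∈ BMK M K ∧ ∀ b' ∈ BMK M K,
    (∑ m, (starRingEnd ℂ) (s m) * b' m).re ≤ (∑ m, (starRingEnd ℂ) (s m) * b m).re

/-- The sectionwise Bayes-optimal denoiser `η` with per-section parameters `τ_ℓ`:
for `j` in section `ℓ`,
`η_j(s,τ) = (∑_k π_k e^{Re(conj(s_j)π_k)/τ_ℓ}) / (∑_{j'∈sec(ℓ)} ∑_{k'} e^{Re(conj(s_{j'})π_{k'})/τ_ℓ})`. -/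
def eta (K L M : ℕ) (τ : Fin L → ℝ) (s : Fin L × Fin M → ℂ) (j : Fin L × Fin M) : ℂ :=
  (∑ k ∈ Finset.Icc 1 K, psk K k *
      (Real.exp (((starRingEnd ℂ) (s j) * psk K k).re / τ j.1) : ℂ)) /
  ((∑ m : Fin M, ∑ k ∈ Finset.Icc 1 K,
      Real.exp (((starRingEnd ℂ) (s (j.1, m)) * psk K k).re / τ j.1) : ℝ) : ℂ)

open Classical in
/-- Real-valued indicator of a proposition. -/
def ind (p : Prop) : ℝ := if p then 1 else 0


lemma psk_eq (K k : ℕ) : psk K k = Complex.exp (((2*Real.pi*k/K : ℝ):ℂ) * Complex.I) := by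
  unfold psk; congr 1; push_cast; ring

lemma abs_psk (K k : ℕ) : ‖psk K k‖ = 1 := by
  rw [psk_eq]; exact Complex.norm_exp_ofReal_mul_I _

lemma re_conj_psk (K k k' : ℕ) :
    ((starRingEnd ℂ) (psk K k') * psk K k).re = Real.cos (2*Real.pi*k/K - 2*Real.pi*k'/K) := by
  rw [psk_eq, psk_eq, ← Complex.exp_conj]
  rw [show (starRingEnd ℂ) (((2*Real.pi*k'/K : ℝ):ℂ) * Complex.I)
      = ((-(2*Real.pi*k'/K) : ℝ):ℂ) * Complex.I by
    simp [map_mul, map_ofNat, Complex.conj_ofReal, Complex.conj_I]]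
  rw [← Complex.exp_add]
  rw [show ((-(2*Real.pi*k'/K):ℝ):ℂ)*Complex.I + ((2*Real.pi*k/K:ℝ):ℂ)*Complex.I
      = ((2*Real.pi*k/K - 2*Real.pi*k'/K : ℝ):ℂ)*Complex.I by push_cast; ring]
  exact Complex.exp_ofReal_mul_I_re _

open Real in
lemma sin_lb (K : ℕ) (hK : 1 ≤ K) {x : ℝ} (h1 : π/K ≤ x) (h2 : x ≤ π - π/K) :
    Real.sin (π/K) ≤ Real.sin x := by
  have hKpos : (0:ℝ) < K := by exact_mod_cast hK
  have hπK : 0 < π/K := div_pos Real.pi_pos hKpos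
  by_cases hK2 : 2 ≤ K
  · have hhalf : π/K ≤ π/2 := by
      apply div_le_div_of_nonneg_left Real.pi_pos.le (by norm_num)
      exact_mod_cast hK2
    by_cases hx : x ≤ π/2
    · exact Real.strictMonoOn_sin.monotoneOn
        (Set.mem_Icc.2 ⟨by linarith [Real.pi_pos], hhalf⟩)
        (Set.mem_Icc.2 ⟨by linarith, hx⟩) h1
    · rw [← Real.sin_pi_sub x]
      exact Real.strictMonoOn_sin.monotoneOn
        (Set.mem_Icc.2 ⟨by linarith [Real.pi_pos], hhalf⟩)
        (Set.mem_Icc.2 ⟨by linarith, by linarith⟩) (by linarith)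
  · interval_cases K
    · simp at h1 h2
      linarith [Real.pi_pos]

open Real in
lemma cos_bound (K k k' : ℕ) (hk : k ∈ Finset.Icc 1 K) (hk' : k' ∈ Finset.Icc 1 K)
    (hne : k ≠ k') :
    ((starRingEnd ℂ) (psk K k') * psk K k).re ≤ 1 - 2 * Real.sin (π / K) ^ 2 := by
  simp only [Finset.mem_Icc] at hk hk'
  have hK1 : 1 ≤ K := le_trans hk.1 hk.2
  have hKpos : (0:ℝ) < K := by exact_mod_cast hK1
  rw [re_conj_psk]
  have hθ : 2*π*(k:ℝ)/K - 2*π*(k':ℝ)/K = 2 * (π * ((k:ℝ) - k') / K) := by ring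
  rw [hθ, Real.cos_two_mul, Real.cos_sq']
  have hsq : Real.sin (π * ((k:ℝ) - k') / K) ^ 2
      = Real.sin (π * |(k:ℝ) - k'| / K) ^ 2 := by
    rcases abs_cases ((k:ℝ) - k') with ⟨h, _⟩ | ⟨h, _⟩
    · rw [h]
    · rw [h, show π * -((k:ℝ) - ↑k') / K = -(π * ((k:ℝ) - k') / K) by ring, Real.sin_neg]
      ring
  have he1 : 1 ≤ |(k:ℝ) - k'| := by
    have h : (1:ℤ) ≤ |(k:ℤ) - (k':ℤ)| := by
      rcases abs_cases ((k:ℤ) - (k':ℤ)) with ⟨h, _⟩ | ⟨h, _⟩ <;> omega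
    have h2 : (1:ℝ) ≤ ((|(k:ℤ) - (k':ℤ)| : ℤ) : ℝ) := by exact_mod_cast h
    push_cast at h2
    exact h2
  have he2 : |(k:ℝ) - k'| ≤ (K:ℝ) - 1 := by
    have h : |(k:ℤ) - (k':ℤ)| ≤ (K:ℤ) - 1 := by
      rcases abs_cases ((k:ℤ) - (k':ℤ)) with ⟨h, _⟩ | ⟨h, _⟩ <;> omega
    have h2 : ((|(k:ℤ) - (k':ℤ)| : ℤ) : ℝ) ≤ ((K:ℤ) - 1 : ℤ) := by exact_mod_cast h
    push_cast at h2
    exact h2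
  have hx1 : π/K ≤ π * |(k:ℝ) - k'| / K := by
    rw [div_le_div_iff_of_pos_right hKpos]
    nlinarith [Real.pi_pos]
  have hx2 : π * |(k:ℝ) - k'| / K ≤ π - π/K := by
    have : π * |(k:ℝ) - k'| / K ≤ π * ((K:ℝ) - 1) / K := by
      rw [div_le_div_iff_of_pos_right hKpos]
      nlinarith [Real.pi_pos]
    calc π * |(k:ℝ) - k'| / K ≤ π * ((K:ℝ) - 1) / K := this
      _ = π - π/K := by field_simp
  have hs := sin_lb K hK1 hx1 hx2
  have hs0 : 0 ≤ Real.sin (π/K) := by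
    apply Real.sin_nonneg_of_nonneg_of_le_pi (by positivity)
    calc π/K ≤ π/1 := by
          apply div_le_div_of_nonneg_left Real.pi_pos.le (by norm_num) (by exact_mod_cast hK1)
      _ = π := by norm_num
  nlinarith [hs, hs0, hsq]

open Real in
lemma section_bound (K M : ℕ) (hK1 : 1 ≤ K) (γ : ℝ) (hγ0 : 0 ≤ γ) (hγh : γ ≤ 1/2)
    (hcos : ∀ k ∈ Finset.Icc 1 K, ∀ k' ∈ Finset.Icc 1 K, k ≠ k' →
      ((starRingEnd ℂ) (psk K k') * psk K k).re ≤ 1 - 2*γ)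
    (sv : Fin M → ℂ) (t : ℝ) (ht : 0 < t)
    (b : Fin M → ℂ) (hb : b ∈ BMK M K)
    (bh : Fin M → ℂ) (hbh : IsHardDec M K sv bh) (hne : bh ≠ b) :
    γ ^ 2 ≤ ∑ m : Fin M, ‖(∑ k ∈ Finset.Icc 1 K, psk K k *
          (Real.exp (((starRingEnd ℂ) (sv m) * psk K k).re / t) : ℂ)) /
        ((∑ m' : Fin M, ∑ k ∈ Finset.Icc 1 K,
          Real.exp (((starRingEnd ℂ) (sv m') * psk K k).re / t) : ℝ) : ℂ)
        - b m‖ ^ 2 := by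
  obtain ⟨m₀, k₀, hk₀, hb_eq⟩ := hb
  obtain ⟨⟨mh, kh, hkh, hbh_eq⟩, hmax⟩ := hbh
  set E : Fin M → ℕ → ℝ :=
    fun m k => Real.exp (((starRingEnd ℂ) (sv m) * psk K k).re / t) with hE
  set Z : ℝ := ∑ m' : Fin M, ∑ k ∈ Finset.Icc 1 K, E m' k with hZdef
  have hEpos : ∀ m k, 0 < E m k := fun m k => Real.exp_pos _
  have hZpos : 0 < Z := by
    apply Finset.sum_pos _ ⟨m₀, Finset.mem_univ m₀⟩
    intro m _
    exact Finset.sum_pos (fun k _ => hEpos m k) ⟨k₀, hk₀⟩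
  -- maximality of E mh kh
  have hEmax : ∀ m : Fin M, ∀ k ∈ Finset.Icc 1 K, E m k ≤ E mh kh := by
    intro m k hk
    have h1 := hmax (fun m' => if m' = m then psk K k else 0) ⟨m, k, hk, rfl⟩
    rw [hbh_eq] at h1
    simp only [mul_ite, mul_zero, Finset.sum_ite_eq', Finset.mem_univ, if_true] at h1
    exact Real.exp_le_exp.2 (div_le_div_of_nonneg_right h1 ht.le)
  -- not both equal
  have h_or : mh ≠ m₀ ∨ kh ≠ k₀ := by
    by_contra h
    push_neg at h
    exact hne (by rw [hbh_eq, hb_eq, h.1, h.2])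
  -- reduce to the m₀ term
  have hsingle : ‖
      (∑ k ∈ Finset.Icc 1 K, psk K k * (E m₀ k : ℂ)) / (Z : ℂ) - b m₀‖ ^ 2
      ≤ ∑ m : Fin M, ‖
      (∑ k ∈ Finset.Icc 1 K, psk K k * (E m k : ℂ)) / (Z : ℂ) - b m‖ ^ 2 :=
    Finset.single_le_sum (f := fun m => ‖
      (∑ k ∈ Finset.Icc 1 K, psk K k * (E m k : ℂ)) / (Z : ℂ) - b m‖ ^ 2)
      (fun m _ => by positivity) (Finset.mem_univ m₀)
  refine le_trans ?_ hsingle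
  rw [hb_eq]
  simp only [if_pos rfl]
  set η : ℂ := (∑ k ∈ Finset.Icc 1 K, psk K k * (E m₀ k : ℂ)) / (Z : ℂ) with hη
  set z : ℂ := (starRingEnd ℂ) (psk K k₀) * (psk K k₀ - η) with hz
  -- |z| = |η - psk K k₀|
  have habs : ‖z‖ = ‖η - psk K k₀‖ := by
    rw [hz, norm_mul, Complex.norm_conj, abs_psk, one_mul, norm_sub_rev]
  -- the core: γ ≤ z.re
  have hcore : γ ≤ z.re := by
    have hre : z.re = 1 - (∑ k ∈ Finset.Icc 1 K,
        ((starRingEnd ℂ) (psk K k₀) * psk K k).re * E m₀ k) / Z := by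
      rw [hz, mul_sub]
      have h1 : ((starRingEnd ℂ) (psk K k₀) * psk K k₀).re = 1 := by
        rw [mul_comm, Complex.mul_conj]
        simp [Complex.normSq_eq_norm_sq, abs_psk]
      have h2 : ((starRingEnd ℂ) (psk K k₀) * η).re
          = (∑ k ∈ Finset.Icc 1 K,
            ((starRingEnd ℂ) (psk K k₀) * psk K k).re * E m₀ k) / Z := by
        rw [hη, ← mul_div_assoc, Complex.div_ofReal_re, Finset.mul_sum]
        congr 1
        rw [Complex.re_sum]
        apply Finset.sum_congr rfl
        intro k _
        rw [← mul_assoc]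
        simp [Complex.mul_re, Complex.ofReal_re, Complex.ofReal_im]
      rw [Complex.sub_re, h1, h2]
    suffices hSZ : (∑ k ∈ Finset.Icc 1 K,
        ((starRingEnd ℂ) (psk K k₀) * psk K k).re * E m₀ k) ≤ (1 - γ) * Z by
      rw [hre]
      have h' := (div_le_iff₀ hZpos).2 hSZ
      linarith
    set A : ℝ := E m₀ k₀ with hA
    set Q : ℝ := ∑ k ∈ (Finset.Icc 1 K).erase k₀, E m₀ k with hQ
    set R : ℝ := ∑ m ∈ Finset.univ.erase m₀, ∑ k ∈ Finset.Icc 1 K, E m k with hR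
    have hZsplit : Z = A + Q + R := by
      rw [hZdef, ← Finset.add_sum_erase _ _ (Finset.mem_univ m₀),
        ← Finset.add_sum_erase _ _ hk₀]
    have hQ0 : 0 ≤ Q := Finset.sum_nonneg fun k _ => (hEpos m₀ k).le
    have hR0 : 0 ≤ R := Finset.sum_nonneg fun m _ =>
      Finset.sum_nonneg fun k _ => (hEpos m k).le
    have hA0 : 0 < A := hEpos m₀ k₀
    have hS : (∑ k ∈ Finset.Icc 1 K,
        ((starRingEnd ℂ) (psk K k₀) * psk K k).re * E m₀ k) ≤ A + (1 - 2*γ) * Q := by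
      rw [← Finset.add_sum_erase _ _ hk₀]
      have hc1 : ((starRingEnd ℂ) (psk K k₀) * psk K k₀).re ≤ 1 := by
        calc ((starRingEnd ℂ) (psk K k₀) * psk K k₀).re
            ≤ ‖(starRingEnd ℂ) (psk K k₀) * psk K k₀‖ := Complex.re_le_norm _
          _ = 1 := by rw [norm_mul, Complex.norm_conj, abs_psk]; norm_num
      have t1 : ((starRingEnd ℂ) (psk K k₀) * psk K k₀).re * E m₀ k₀ ≤ A :=
        le_trans (mul_le_mul_of_nonneg_right hc1 (hEpos m₀ k₀).le) (by rw [one_mul])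
      have t2 : ∑ k ∈ (Finset.Icc 1 K).erase k₀,
          ((starRingEnd ℂ) (psk K k₀) * psk K k).re * E m₀ k ≤ (1 - 2*γ) * Q := by
        rw [hQ, Finset.mul_sum]
        apply Finset.sum_le_sum
        intro k hk
        have hk' := Finset.mem_of_mem_erase hk
        have hkne := Finset.ne_of_mem_erase hk
        exact mul_le_mul_of_nonneg_right (hcos k hk' k₀ hk₀ hkne) (hEpos m₀ k).le
      linarith
    refine le_trans hS ?_
    rcases h_or with hcase | hcase
    · -- mh ≠ m₀ : A ≤ E mh kh ≤ R
      have h1 : E mh kh ≤ R := by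
        calc E mh kh ≤ ∑ k ∈ Finset.Icc 1 K, E mh k :=
              Finset.single_le_sum (fun k _ => (hEpos mh k).le) hkh
          _ ≤ R := Finset.single_le_sum
              (fun m (_ : m ∈ Finset.univ.erase m₀) =>
                Finset.sum_nonneg fun k _ => (hEpos m k).le)
              (Finset.mem_erase.2 ⟨hcase, Finset.mem_univ mh⟩)
      have h2 : A ≤ R := le_trans (hEmax m₀ k₀ hk₀) h1
      rw [hZsplit]
      nlinarith
    · -- kh ≠ k₀, so if mh = m₀ then A ≤ Q; otherwise A ≤ R as before
      by_cases hm : mh = m₀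
      · have h1 : E m₀ kh ≤ Q :=
          Finset.single_le_sum (fun k (_ : k ∈ (Finset.Icc 1 K).erase k₀) => (hEpos m₀ k).le)
            (Finset.mem_erase.2 ⟨hcase, hkh⟩)
        have h2 : A ≤ Q := by
          have := hEmax m₀ k₀ hk₀
          rw [hm] at this
          exact le_trans this h1
        rw [hZsplit]
        nlinarith
      · have h1 : E mh kh ≤ R := by
          calc E mh kh ≤ ∑ k ∈ Finset.Icc 1 K, E mh k :=
                Finset.single_le_sum (fun k _ => (hEpos mh k).le) hkh
            _ ≤ R := Finset.single_le_sum
                (fun m (_ : m ∈ Finset.univ.erase m₀) =>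
                  Finset.sum_nonneg fun k _ => (hEpos m k).le)
                (Finset.mem_erase.2 ⟨hm, Finset.mem_univ mh⟩)
        have h2 : A ≤ R := le_trans (hEmax m₀ k₀ hk₀) h1
        rw [hZsplit]
        nlinarith
  -- finish: γ² ≤ z.re² ≤ |z|² = |η - psk k₀|²
  calc γ ^ 2 ≤ z.re ^ 2 := pow_le_pow_left₀ hγ0 hcore 2
    _ = |z.re| ^ 2 := (sq_abs _).symm
    _ ≤ ‖z‖ ^ 2 := pow_le_pow_left₀ (abs_nonneg _) (Complex.abs_re_le_norm z) 2
    _ = ‖η - psk K k₀‖ ^ 2 := by rw [habs]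


/-- **Bounding the section error rate in terms of the normalized mean squared error.**
Let `K` be a power of 2, `β` a valid message vector, `s ∈ ℂ^{LM}` arbitrary, `τ_ℓ > 0`,
`β^T = η(s,τ)` the soft decision, and `β̂` any sectionwise hard-decision maximizer.
Then `SER ≤ 4‖β^T − β‖²/L` if `K ∈ {1,2,4}` and `SER ≤ sin(π/K)^{−4}·‖β^T − β‖²/L`
if `K ≥ 8`. -/
theorem ser_le_nmse (K L M : ℕ) (hK : ∃ m : ℕ, K = 2 ^ m) (hL : 0 < L)
    (β : Fin L × Fin M → ℂ) (hβ : ∀ ℓ : Fin L, (fun m => β (ℓ, m)) ∈ BMK M K)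
    (s : Fin L × Fin M → ℂ) (τ : Fin L → ℝ) (hτ : ∀ ℓ, 0 < τ ℓ)
    (βhat : Fin L × Fin M → ℂ)
    (hhat : ∀ ℓ : Fin L, IsHardDec M K (fun m => s (ℓ, m)) (fun m => βhat (ℓ, m))) :
    ((K = 1 ∨ K = 2 ∨ K = 4) →
      (1 / (L : ℝ)) * ∑ ℓ : Fin L, ind ((fun m => βhat (ℓ, m)) ≠ fun m => β (ℓ, m))
        ≤ 4 * (∑ j, ‖eta K L M τ s j - β j‖ ^ 2) / L) ∧
    (8 ≤ K →
      (1 / (L : ℝ)) * ∑ ℓ : Fin L, ind ((fun m => βhat (ℓ, m)) ≠ fun m => β (ℓ, m))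
        ≤ (Real.sin (Real.pi / K) ^ 4)⁻¹ *
            (∑ j, ‖eta K L M τ s j - β j‖ ^ 2) / L) := by
  have hK1 : 1 ≤ K := by
    obtain ⟨m, rfl⟩ := hK
    exact Nat.one_le_two_pow
  have hLpos : (0:ℝ) < L := by exact_mod_cast hL
  have main : ∀ γ : ℝ, 0 ≤ γ → γ ≤ 1/2 →
      (∀ k ∈ Finset.Icc 1 K, ∀ k' ∈ Finset.Icc 1 K, k ≠ k' →
        ((starRingEnd ℂ) (psk K k') * psk K k).re ≤ 1 - 2*γ) →
      γ^2 * (∑ ℓ : Fin L, ind ((fun m => βhat (ℓ, m)) ≠ fun m => β (ℓ, m)))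
        ≤ ∑ j, ‖eta K L M τ s j - β j‖ ^ 2 := by
    intro γ h0 h12 hcos
    rw [Fintype.sum_prod_type, Finset.mul_sum]
    apply Finset.sum_le_sum
    intro ℓ _
    by_cases h : (fun m => βhat (ℓ, m)) ≠ (fun m => β (ℓ, m))
    · rw [ind, if_pos h, mul_one]
      have hsec := section_bound K M hK1 γ h0 h12 hcos (fun m => s (ℓ, m)) (τ ℓ) (hτ ℓ)
        (fun m => β (ℓ, m)) (hβ ℓ) (fun m => βhat (ℓ, m)) (hhat ℓ) h
      exact hsec
    · rw [ind, if_neg h, mul_zero]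
      positivity
  have final : ∀ C T : ℝ,
      (∑ ℓ : Fin L, ind ((fun m => βhat (ℓ, m)) ≠ fun m => β (ℓ, m))) ≤ C * T →
      1/(L:ℝ) * (∑ ℓ : Fin L, ind ((fun m => βhat (ℓ, m)) ≠ fun m => β (ℓ, m))) ≤ C * T / L := by
    intro C T h
    have h2 := mul_le_mul_of_nonneg_left h (by positivity : (0:ℝ) ≤ ((L:ℝ))⁻¹)
    calc 1/(L:ℝ) * (∑ ℓ : Fin L, ind ((fun m => βhat (ℓ, m)) ≠ fun m => β (ℓ, m)))
        = (L:ℝ)⁻¹ * (∑ ℓ : Fin L, ind ((fun m => βhat (ℓ, m)) ≠ fun m => β (ℓ, m))) := by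
          rw [one_div]
      _ ≤ (L:ℝ)⁻¹ * (C * T) := h2
      _ = C * T / L := by rw [div_eq_mul_inv]; ring
  constructor
  · intro hK124
    have hcos : ∀ k ∈ Finset.Icc 1 K, ∀ k' ∈ Finset.Icc 1 K, k ≠ k' →
        ((starRingEnd ℂ) (psk K k') * psk K k).re ≤ 1 - 2*(1/2 : ℝ) := by
      intro k hk k' hk' hne
      rcases hK124 with rfl | rfl | rfl
      · simp only [Finset.mem_Icc] at hk hk'
        omega
      · have := cos_bound 2 k k' hk hk' hne
        have h2 : Real.sin (Real.pi / (2:ℕ)) = 1 := by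
          norm_num [Real.sin_pi_div_two]
        rw [h2] at this
        linarith
      · have := cos_bound 4 k k' hk hk' hne
        have h4 : Real.sin (Real.pi / (4:ℕ)) ^ 2 = 1/2 := by
          have h44 : ((4:ℕ):ℝ) = 4 := by norm_num
          rw [h44, Real.sin_pi_div_four, div_pow, Real.sq_sqrt (by norm_num : (0:ℝ) ≤ 2)]
          norm_num
        rw [h4] at this
        linarith
    have hmain := main (1/2) (by norm_num) le_rfl hcos
    apply final
    nlinarith
  · intro hK8
    have hπKpos : 0 < Real.pi / K := by
      apply div_pos Real.pi_pos
      exact_mod_cast hK1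
    have hsinpos : 0 < Real.sin (Real.pi / K) := by
      apply Real.sin_pos_of_pos_of_lt_pi hπKpos
      have h2 : (2:ℝ) ≤ K := by exact_mod_cast le_trans (by norm_num) hK8
      calc Real.pi / K ≤ Real.pi / 2 := by
            apply div_le_div_of_nonneg_left Real.pi_pos.le (by norm_num) h2
        _ < Real.pi := by linarith [Real.pi_pos]
    set γ : ℝ := Real.sin (Real.pi / K) ^ 2 with hγ
    have hγ0 : 0 ≤ γ := sq_nonneg _
    have hγ12 : γ ≤ 1/2 := by
      have hK8' : (8:ℝ) ≤ K := by exact_mod_cast hK8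
      have h1 : Real.sin (Real.pi / K) ≤ Real.pi / K := Real.sin_le hπKpos.le
      have h2 : Real.pi / K ≤ 1/2 := by
        rw [div_le_iff₀ (by linarith : (0:ℝ) < (K:ℝ))]
        nlinarith [Real.pi_le_four]
      nlinarith
    have hmain := main γ hγ0 hγ12 (fun k hk k' hk' hne => cos_bound K k k' hk hk' hne)
    have hγ4 : γ^2 = Real.sin (Real.pi / K) ^ 4 := by rw [hγ]; ring
    apply final
    rw [inv_mul_eq_div, le_div_iff₀ (by positivity : (0:ℝ) < Real.sin (Real.pi / K) ^ 4)]
    linarith [hγ4 ▸ hmain]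
end
end

section
/- Let K = 2 and M ≥ 2. For every ν > 0, E_{2,M}(ν) ≥ − (2M)^{−ν/2} / √(2π·ν·ln(2M)). -/
open MeasureTheory ProbabilityTheory Finset

noncomputable section

/-- Law of `(U₁, (U₂,…,U_M))` where `U_j = U_j^R + i·U_j^I` with all real/imaginary parts
i.i.d. standard Gaussian `N(0,1)` (so each `U_j ~ CN(0,2)`): the first factor carries the
real and imaginary parts of `U₁`, the second the real and imaginary parts of `U₂,…,U_M`. -/
def seMeasure (M : ℕ) :
    Measure ((ℝ × ℝ) × ((Fin (M - 1) → ℝ) × (Fin (M - 1) → ℝ))) :=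
  ((gaussianReal 0 1).prod (gaussianReal 0 1)).prod
    ((Measure.pi fun _ => gaussianReal 0 1).prod (Measure.pi fun _ => gaussianReal 0 1))

/-- The state-evolution functional `E_{K,M}(ν) = E[N/D]`, with `μ = ν·ln(KM)`,
`N = ∑_{k=1}^K Re(π_k)·exp(μ Re(π_k) + √μ Re(U₁ conj(π_k)))` and
`D = ∑_{a=1}^K exp(μ Re(π_a) + √μ Re(U₁ conj(π_a)))
   + ∑_{j=2}^M ∑_{b=1}^K exp(√μ Re(U_j conj(π_b)))`,
where `U₁,…,U_M` are i.i.d. `CN(0,2)`. -/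
def EKM (K M : ℕ) (ν : ℝ) : ℝ :=
  ∫ u, (∑ k ∈ Finset.Icc 1 K, (psk K k).re *
          Real.exp (ν * Real.log ((K : ℝ) * M) * (psk K k).re +
            Real.sqrt (ν * Real.log ((K : ℝ) * M)) *
              (((u.1.1 : ℂ) + (u.1.2 : ℂ) * Complex.I) * (starRingEnd ℂ) (psk K k)).re)) /
       ((∑ a ∈ Finset.Icc 1 K,
          Real.exp (ν * Real.log ((K : ℝ) * M) * (psk K a).re +
            Real.sqrt (ν * Real.log ((K : ℝ) * M)) *
              (((u.1.1 : ℂ) + (u.1.2 : ℂ) * Complex.I) * (starRingEnd ℂ) (psk K a)).re)) +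
        ∑ j : Fin (M - 1), ∑ b ∈ Finset.Icc 1 K,
          Real.exp (Real.sqrt (ν * Real.log ((K : ℝ) * M)) *
            (((u.2.1 j : ℂ) + (u.2.2 j : ℂ) * Complex.I) * (starRingEnd ℂ) (psk K b)).re))
    ∂(seMeasure M)

lemma psk_two_one : psk 2 1 = -1 := by
  unfold psk
  have h : 2 * (Real.pi : ℂ) * Complex.I * ((1:ℕ) : ℂ) / ((2:ℕ) : ℂ) = Real.pi * Complex.I := by
    push_cast; ring
  rw [h, Complex.exp_pi_mul_I]

lemma psk_two_two : psk 2 2 = 1 := by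
  unfold psk
  have h : 2 * (Real.pi : ℂ) * Complex.I * ((2:ℕ) : ℂ) / ((2:ℕ) : ℂ)
      = Real.pi * Complex.I + Real.pi * Complex.I := by push_cast; ring
  rw [h, Complex.exp_add, Complex.exp_pi_mul_I]
  norm_num

instance seMeasure_isProb (M : ℕ) : IsProbabilityMeasure (seMeasure M) := by
  unfold seMeasure; infer_instance

lemma gauss_antideriv (x : ℝ) :
    HasDerivAt (fun x : ℝ => -Real.exp (-(x^2)/2)) (x * Real.exp (-(x^2)/2)) x := by
  have h1 : HasDerivAt (fun x : ℝ => -(x^2)/2) (-x) x := by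
    have := ((hasDerivAt_pow 2 x).neg).div_const 2
    simpa using this.congr_deriv (by ring)
  have : HasDerivAt (fun x : ℝ => -Real.exp (-(x^2)/2)) (-(Real.exp (-(x^2)/2) * -x)) x :=
    (h1.exp).neg
  convert this using 1
  ring

lemma gauss_tendsto :
    Filter.Tendsto (fun x : ℝ => -Real.exp (-(x^2)/2)) Filter.atTop (nhds 0) := by
  rw [show (0:ℝ) = -0 by norm_num]
  apply Filter.Tendsto.neg
  apply Real.tendsto_exp_atBot.comp
  apply Filter.Tendsto.atBot_div_const (by norm_num : (0:ℝ) < 2)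
  apply Filter.tendsto_neg_atBot_iff.mpr
  exact Filter.tendsto_pow_atTop (by norm_num)

lemma gauss_key (s : ℝ) (hs : 0 < s) :
    ∫ x in Set.Ioi s, x * Real.exp (-(x^2)/2) = Real.exp (-(s^2)/2) := by
  have := integral_Ioi_of_hasDerivAt_of_nonneg' (a := s)
    (fun x _ => gauss_antideriv x)
    (fun x hx => mul_nonneg (le_of_lt (hs.trans hx)) (Real.exp_pos _).le)
    gauss_tendsto
  simpa using this

lemma gauss_int (s : ℝ) (hs : 0 < s) :
    IntegrableOn (fun x => x * Real.exp (-(x^2)/2)) (Set.Ioi s) :=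
  integrableOn_Ioi_deriv_of_nonneg' (fun x _ => gauss_antideriv x)
    (fun x hx => mul_nonneg (le_of_lt (hs.trans hx)) (Real.exp_pos _).le)
    gauss_tendsto

lemma gauss_tail (s : ℝ) (hs : 0 < s) :
    ((gaussianReal 0 1) (Set.Iio (-s))).toReal
      ≤ Real.exp (-(s^2)/2) / (s * Real.sqrt (2 * Real.pi)) := by
  rw [gaussianReal_apply_eq_integral 0 one_ne_zero (Set.Iio (-s)),
    ENNReal.toReal_ofReal (setIntegral_nonneg measurableSet_Iio
      (fun x _ => gaussianPDFReal_nonneg 0 1 x))]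
  set c : ℝ := (Real.sqrt (2 * Real.pi))⁻¹ with hc
  have hcpos : 0 < c := by
    rw [hc]; exact inv_pos.mpr (Real.sqrt_pos.mpr (by positivity))
  have hpdf : ∀ x : ℝ, gaussianPDFReal 0 1 (-x) = c * Real.exp (-(x^2)/2) := by
    intro x
    simp [gaussianPDFReal, hc]
  have h1 : ∫ x in Set.Iio (-s), gaussianPDFReal 0 1 x
      = ∫ x in Set.Ioi s, c * Real.exp (-(x^2)/2) := by
    rw [← integral_Iic_eq_integral_Iio, ← integral_comp_neg_Ioi]
    exact setIntegral_congr_fun measurableSet_Ioi (fun x _ => hpdf x)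
  rw [h1]
  have hint2 : IntegrableOn (fun x => (c/s) * (x * Real.exp (-(x^2)/2))) (Set.Ioi s) :=
    (gauss_int s hs).const_mul _
  have hint1 : IntegrableOn (fun x => c * Real.exp (-(x^2)/2)) (Set.Ioi s) := by
    refine Integrable.mono' hint2 ?_ ?_
    · exact (Continuous.aestronglyMeasurable (by continuity)).restrict
    · filter_upwards [ae_restrict_mem measurableSet_Ioi] with x hx
      have hxs : s < x := hx
      have he : (0:ℝ) < Real.exp (-(x^2)/2) := Real.exp_pos _
      rw [Real.norm_eq_abs, abs_of_nonneg (by positivity), div_mul_eq_mul_div, le_div_iff₀ hs]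
      nlinarith [mul_nonneg (mul_pos hcpos he).le (sub_nonneg.mpr hxs.le)]
  calc ∫ x in Set.Ioi s, c * Real.exp (-(x^2)/2)
      ≤ ∫ x in Set.Ioi s, (c/s) * (x * Real.exp (-(x^2)/2)) := by
        refine setIntegral_mono_on hint1 hint2 measurableSet_Ioi (fun x hx => ?_)
        have hxs : s < x := hx
        have he : (0:ℝ) < Real.exp (-(x^2)/2) := Real.exp_pos _
        rw [div_mul_eq_mul_div, le_div_iff₀ hs]
        nlinarith [mul_nonneg (mul_pos hcpos he).le (sub_nonneg.mpr hxs.le)]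
    _ = (c/s) * Real.exp (-(s^2)/2) := by
        rw [integral_const_mul, gauss_key s hs]
    _ = Real.exp (-(s^2)/2) / (s * Real.sqrt (2 * Real.pi)) := by
        rw [hc]; field_simp


/-- **Lower bound on `E_{2,M}(ν)` valid for all `ν > 0`** (BPSK case, M ≥ 2):
`E_{2,M}(ν) ≥ −(2M)^{−ν/2}/√(2πν ln(2M))`. -/
theorem EKM_two_lower_bound_all_nu (M : ℕ) (hM : 2 ≤ M) (ν : ℝ) (hν : 0 < ν) :
    -(((2 : ℝ) * M) ^ (-(ν / 2)) / Real.sqrt (2 * Real.pi * ν * Real.log ((2 : ℝ) * M)))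
      ≤ EKM 2 M ν := by
  have hM2 : (2:ℝ) ≤ (M:ℝ) := by exact_mod_cast hM
  have hM1 : (1:ℝ) < 2 * M := by nlinarith
  set L : ℝ := Real.log ((2:ℝ) * M) with hLdef
  have hL : 0 < L := Real.log_pos hM1
  set m : ℝ := ν * L with hm
  have hmpos : 0 < m := mul_pos hν hL
  set s : ℝ := Real.sqrt m with hsdef
  have hspos : 0 < s := Real.sqrt_pos.mpr hmpos
  have hs2 : s ^ 2 = m := Real.sq_sqrt hmpos.le
  -- the simplified integrand
  set f : ((ℝ × ℝ) × ((Fin (M - 1) → ℝ) × (Fin (M - 1) → ℝ))) → ℝ :=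
    fun u => (Real.exp (m + s * u.1.1) - Real.exp (-(m + s * u.1.1))) /
      ((Real.exp (m + s * u.1.1) + Real.exp (-(m + s * u.1.1))) +
        ∑ j : Fin (M - 1), (Real.exp (-(s * u.2.1 j)) + Real.exp (s * u.2.1 j))) with hf
  have hEKM : EKM 2 M ν = ∫ u, f u ∂(seMeasure M) := by
    unfold EKM
    congr 1
    funext u
    have hIcc : Finset.Icc 1 2 = ({1, 2} : Finset ℕ) := rfl
    simp only [hIcc, Finset.sum_pair (by norm_num : (1:ℕ) ≠ 2), psk_two_one, psk_two_two,
      Nat.cast_ofNat, ← hLdef, ← hm, ← hsdef, hf]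
    simp only [Complex.neg_re, Complex.one_re, map_neg, map_one, mul_neg, mul_one,
      Complex.add_re, Complex.ofReal_re, Complex.mul_re, Complex.I_re,
      Complex.I_im, Complex.ofReal_im, mul_zero, zero_mul, sub_zero, zero_sub]
    ring_nf
  -- positivity of the denominator
  have hT : ∀ u : ((ℝ × ℝ) × ((Fin (M - 1) → ℝ) × (Fin (M - 1) → ℝ))),
      (0:ℝ) ≤ ∑ j : Fin (M - 1), (Real.exp (-(s * u.2.1 j)) + Real.exp (s * u.2.1 j)) :=
    fun u => Finset.sum_nonneg fun j _ => by positivity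
  have hD : ∀ u : ((ℝ × ℝ) × ((Fin (M - 1) → ℝ) × (Fin (M - 1) → ℝ))),
      (0:ℝ) < (Real.exp (m + s * u.1.1) + Real.exp (-(m + s * u.1.1))) +
        ∑ j : Fin (M - 1), (Real.exp (-(s * u.2.1 j)) + Real.exp (s * u.2.1 j)) := by
    intro u
    have := hT u
    have h1 := Real.exp_pos (m + s * u.1.1)
    have h2 := Real.exp_pos (-(m + s * u.1.1))
    linarith
  -- the indicator lower bound
  set A : Set ((ℝ × ℝ) × ((Fin (M - 1) → ℝ) × (Fin (M - 1) → ℝ))) :=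
    {p | p.1.1 < -s} with hA
  have hAmeas : MeasurableSet A :=
    measurableSet_Iio.preimage (measurable_fst.comp measurable_fst)
  set g : ((ℝ × ℝ) × ((Fin (M - 1) → ℝ) × (Fin (M - 1) → ℝ))) → ℝ :=
    A.indicator (fun _ => (-1:ℝ)) with hg
  have hgle : ∀ u, g u ≤ f u := by
    intro u
    by_cases hu : u ∈ A
    · have hgu : g u = -1 := by rw [hg]; simp [Set.indicator_of_mem hu]
      rw [hgu, hf]
      rw [le_div_iff₀ (hD u)]
      have h1 := Real.exp_pos (m + s * u.1.1)
      have h2 := Real.exp_pos (-(m + s * u.1.1))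
      have := hT u
      nlinarith
    · have hgu : g u = 0 := by rw [hg]; simp [Set.indicator_of_notMem hu]
      rw [hgu, hf]
      apply div_nonneg _ (hD u).le
      have hx : -s ≤ u.1.1 := by
        by_contra h
        exact hu (by simpa [hA] using lt_of_not_ge h)
      have hA0 : (0:ℝ) ≤ m + s * u.1.1 := by nlinarith
      have := Real.exp_le_exp.mpr (by linarith : -(m + s * u.1.1) ≤ m + s * u.1.1)
      linarith
  -- integrability
  have hfcont : Continuous f := by
    rw [hf]
    apply Continuous.div
    · fun_prop
    · fun_prop
    · exact fun u => (hD u).ne'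
  have hfint : Integrable f (seMeasure M) := by
    refine (integrable_const (1:ℝ)).mono' hfcont.aestronglyMeasurable ?_
    filter_upwards with u
    rw [hf, Real.norm_eq_abs, abs_div]
    have hDu := hD u
    rw [abs_of_pos hDu, div_le_one hDu]
    have h1 := Real.exp_pos (m + s * u.1.1)
    have h2 := Real.exp_pos (-(m + s * u.1.1))
    have := hT u
    rw [abs_sub_le_iff]
    constructor <;> linarith
  have hgint : Integrable g (seMeasure M) := by
    rw [hg]
    exact (integrable_const (-1:ℝ)).indicator hAmeas
  -- integral comparison
  have hmono : ∫ u, g u ∂(seMeasure M) ≤ ∫ u, f u ∂(seMeasure M) :=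
    integral_mono hgint hfint hgle
  -- compute ∫ g
  have hAeq : A = (Set.Iio (-s) ×ˢ Set.univ) ×ˢ (Set.univ) := by
    ext p; simp [hA]
  have hmeasA : seMeasure M A = (gaussianReal 0 1) (Set.Iio (-s)) := by
    rw [hAeq]
    unfold seMeasure
    rw [Measure.prod_prod, Measure.prod_prod, measure_univ, measure_univ, mul_one, mul_one]
  have hintg : ∫ u, g u ∂(seMeasure M)
      = -((gaussianReal 0 1) (Set.Iio (-s))).toReal := by
    rw [hg, integral_indicator_const _ hAmeas, measureReal_def, hmeasA]
    simp
  -- final chain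
  rw [hEKM]
  refine le_trans ?_ (le_trans (le_of_eq hintg.symm) hmono)
  rw [neg_le_neg_iff]
  have htail := gauss_tail s hspos
  refine le_trans htail (le_of_eq ?_)
  have h2M : (0:ℝ) < 2 * M := by linarith
  have he : Real.exp (-(s^2)/2) = ((2:ℝ) * M) ^ (-(ν / 2)) := by
    rw [Real.rpow_def_of_pos h2M, ← hLdef, hs2, hm]
    ring_nf
  have hsq : Real.sqrt (2 * Real.pi * ν * L) = Real.sqrt (2 * Real.pi) * s := by
    rw [hsdef, hm, ← Real.sqrt_mul (by positivity : (0:ℝ) ≤ 2 * Real.pi)]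
    ring_nf
  rw [he, hsq, mul_comm (Real.sqrt (2 * Real.pi)) s]
end
end

section
/- For every ν_max > 2 there exists a constant κ₂ > 0 (depending only on ν_max) such that the following holds: for every δ ∈ (0,1/2) and every ν with 2 + δ < ν ≤ ν_max, there exists M₀ such that for all M ≥ M₀, E_{2,M}(ν) ≥ 1 − (2M)^{−κ₂δ²} / (δ·√(ln(2M))). -/
open MeasureTheory ProbabilityTheory Finset

noncomputable section

namespace SEAux

open Real
open scoped ENNReal NNReal

/-! ### Gaussian facts -/

lemma exp_mul_gaussianPDFReal (t x : ℝ) :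
    rexp (t * x) * gaussianPDFReal 0 1 x = rexp (t ^ 2 / 2) * gaussianPDFReal t 1 x := by
  simp only [gaussianPDFReal, NNReal.coe_one, mul_one]
  rw [mul_left_comm, ← Real.exp_add, mul_left_comm, ← Real.exp_add]
  congr 2
  ring

lemma integral_exp_mul_gaussianReal (t : ℝ) :
    ∫ x, rexp (t * x) ∂(gaussianReal 0 1) = rexp (t ^ 2 / 2) := by
  rw [gaussianReal_of_var_ne_zero 0 one_ne_zero]
  have hpdf : gaussianPDF 0 1 = fun x => ((gaussianPDFReal 0 1 x).toNNReal : ℝ≥0∞) := by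
    ext x; simp [gaussianPDF, ENNReal.ofReal]
  rw [hpdf, integral_withDensity_eq_integral_smul
    ((measurable_gaussianPDFReal 0 1).real_toNNReal) _]
  have h : ∀ x : ℝ, (gaussianPDFReal 0 1 x).toNNReal • rexp (t * x)
      = rexp (t ^ 2 / 2) * gaussianPDFReal t 1 x := by
    intro x
    rw [NNReal.smul_def, smul_eq_mul, Real.coe_toNNReal _ (gaussianPDFReal_nonneg 0 1 x),
      mul_comm, exp_mul_gaussianPDFReal]
  simp_rw [h]
  rw [integral_const_mul, integral_gaussianPDFReal_eq_one t one_ne_zero, mul_one]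

lemma integrable_exp_mul_gaussianReal (t : ℝ) :
    Integrable (fun x => rexp (t * x)) (gaussianReal 0 1) := by
  rw [gaussianReal_of_var_ne_zero 0 one_ne_zero]
  have hpdf : gaussianPDF 0 1 = fun x => ((gaussianPDFReal 0 1 x).toNNReal : ℝ≥0∞) := by
    ext x; simp [gaussianPDF, ENNReal.ofReal]
  rw [hpdf, integrable_withDensity_iff_integrable_smul
    ((measurable_gaussianPDFReal 0 1).real_toNNReal)]
  have h : ∀ x : ℝ, (gaussianPDFReal 0 1 x).toNNReal • rexp (t * x)
      = rexp (t ^ 2 / 2) * gaussianPDFReal t 1 x := by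
    intro x
    rw [NNReal.smul_def, smul_eq_mul, Real.coe_toNNReal _ (gaussianPDFReal_nonneg 0 1 x),
      mul_comm, exp_mul_gaussianPDFReal]
  simp_rw [h]
  exact (integrable_gaussianPDFReal t 1).const_mul _

lemma gaussianReal_tail (s : ℝ) (hs : 0 < s) :
    ((gaussianReal 0 1) (Set.Iio (-s))).toReal ≤ rexp (-(s ^ 2) / 2) := by
  have hmarkov := mul_meas_ge_le_integral_of_nonneg (μ := gaussianReal 0 1)
      (f := fun x => rexp (-s * x)) (Filter.Eventually.of_forall fun x => (Real.exp_pos _).le)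
      (integrable_exp_mul_gaussianReal (-s)) (rexp (s ^ 2))
  rw [integral_exp_mul_gaussianReal] at hmarkov
  have hsub : Set.Iio (-s) ⊆ {x | rexp (s ^ 2) ≤ rexp (-s * x)} := by
    intro x hx
    simp only [Set.mem_Iio] at hx
    simp only [Set.mem_setOf_eq]
    rw [Real.exp_le_exp]
    nlinarith
  have h1 : ((gaussianReal 0 1) (Set.Iio (-s))).toReal
      ≤ ((gaussianReal 0 1) {x | rexp (s ^ 2) ≤ rexp (-s * x)}).toReal :=
    ENNReal.toReal_mono (measure_ne_top _ _) (measure_mono hsub)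
  have h2 : ((gaussianReal 0 1) {x | rexp (s ^ 2) ≤ rexp (-s * x)}).toReal
      ≤ rexp ((-s) ^ 2 / 2) / rexp (s ^ 2) := by
    rw [le_div_iff₀ (Real.exp_pos _), mul_comm]
    exact hmarkov
  refine h1.trans (h2.trans ?_)
  rw [← Real.exp_sub]
  apply Real.exp_le_exp.2
  nlinarith

/-! ### Marginals of `seMeasure` -/

lemma map_eval_pi' {ι : Type*} [Fintype ι] [DecidableEq ι] {α : ι → Type*}
    [∀ i, MeasurableSpace (α i)]
    (μ : ∀ i, Measure (α i)) [∀ i, IsProbabilityMeasure (μ i)] (i : ι) :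
    Measure.map (Function.eval i) (Measure.pi μ) = μ i := by
  ext s hs
  rw [Measure.map_apply (measurable_pi_apply i) hs]
  have hpre : Function.eval i ⁻¹' s
      = Set.pi Set.univ (Function.update (fun j => (Set.univ : Set (α j))) i s) := by
    ext f
    simp only [Set.mem_preimage, Set.mem_pi, Set.mem_univ, forall_true_left]
    constructor
    · intro h j
      rcases eq_or_ne j i with rfl | hj
      · simpa using h
      · simp [Function.update_of_ne hj]
    · intro h
      simpa using h i
  rw [hpre, Measure.pi_pi]
  rw [Finset.prod_eq_single i (fun j _ hj => by simp [Function.update_of_ne hj])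
    (fun h => absurd (Finset.mem_univ i) h)]
  simp

instance (M : ℕ) : IsProbabilityMeasure (seMeasure M) := by
  unfold seMeasure; infer_instance

lemma seMeasure_map_x (M : ℕ) :
    Measure.map (fun u : (ℝ × ℝ) × ((Fin (M - 1) → ℝ) × (Fin (M - 1) → ℝ)) => u.1.1)
      (seMeasure M) = gaussianReal 0 1 := by
  have h : (fun u : (ℝ × ℝ) × ((Fin (M - 1) → ℝ) × (Fin (M - 1) → ℝ)) => u.1.1)
      = Prod.fst ∘ Prod.fst := rfl
  rw [h, ← Measure.map_map measurable_fst measurable_fst, seMeasure,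
    Measure.map_fst_prod]
  simp

lemma seMeasure_map_y (M : ℕ) (j : Fin (M - 1)) :
    Measure.map (fun u : (ℝ × ℝ) × ((Fin (M - 1) → ℝ) × (Fin (M - 1) → ℝ)) => u.2.1 j)
      (seMeasure M) = gaussianReal 0 1 := by
  have h : (fun u : (ℝ × ℝ) × ((Fin (M - 1) → ℝ) × (Fin (M - 1) → ℝ)) => u.2.1 j)
      = (Function.eval j) ∘ Prod.fst ∘ Prod.snd := rfl
  rw [h, ← Measure.map_map (measurable_pi_apply j) (measurable_fst.comp measurable_snd),
    ← Measure.map_map measurable_fst measurable_snd, seMeasure, Measure.map_snd_prod]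
  simp only [measure_univ, one_smul, Measure.map_fst_prod]
  rw [map_eval_pi']

lemma measurable_x (M : ℕ) :
    Measurable (fun u : (ℝ × ℝ) × ((Fin (M - 1) → ℝ) × (Fin (M - 1) → ℝ)) => u.1.1) :=
  measurable_fst.comp measurable_fst

lemma measurable_y (M : ℕ) (j : Fin (M - 1)) :
    Measurable (fun u : (ℝ × ℝ) × ((Fin (M - 1) → ℝ) × (Fin (M - 1) → ℝ)) => u.2.1 j) :=
  (measurable_pi_apply j).comp (measurable_fst.comp measurable_snd)

lemma integrable_comp_x {M : ℕ} {f : ℝ → ℝ} (hf : Integrable f (gaussianReal 0 1))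
    (hfm : AEStronglyMeasurable f (gaussianReal 0 1)) :
    Integrable (fun u : (ℝ × ℝ) × ((Fin (M - 1) → ℝ) × (Fin (M - 1) → ℝ)) => f u.1.1)
      (seMeasure M) := by
  have h := seMeasure_map_x M
  exact (integrable_map_measure (by rw [h]; exact hfm) (measurable_x M).aemeasurable).1
    (by rw [h]; exact hf)

lemma integral_comp_x {M : ℕ} {f : ℝ → ℝ} (hfm : AEStronglyMeasurable f (gaussianReal 0 1)) :
    ∫ u, f u.1.1 ∂(seMeasure M) = ∫ x, f x ∂(gaussianReal 0 1) := by
  rw [← seMeasure_map_x M,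
    integral_map (measurable_x M).aemeasurable (by rw [seMeasure_map_x M]; exact hfm)]

lemma integrable_comp_y {M : ℕ} (j : Fin (M - 1)) {f : ℝ → ℝ}
    (hf : Integrable f (gaussianReal 0 1))
    (hfm : AEStronglyMeasurable f (gaussianReal 0 1)) :
    Integrable (fun u : (ℝ × ℝ) × ((Fin (M - 1) → ℝ) × (Fin (M - 1) → ℝ)) => f (u.2.1 j))
      (seMeasure M) := by
  have h := seMeasure_map_y M j
  exact (integrable_map_measure (by rw [h]; exact hfm) (measurable_y M j).aemeasurable).1
    (by rw [h]; exact hf)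

lemma integral_comp_y {M : ℕ} (j : Fin (M - 1)) {f : ℝ → ℝ}
    (hfm : AEStronglyMeasurable f (gaussianReal 0 1)) :
    ∫ u, f (u.2.1 j) ∂(seMeasure M) = ∫ x, f x ∂(gaussianReal 0 1) := by
  rw [← seMeasure_map_y M j,
    integral_map (measurable_y M j).aemeasurable (by rw [seMeasure_map_y M j]; exact hfm)]

/-! ### The BPSK integrand -/

lemma psk_two_one : psk 2 1 = -1 := by
  rw [psk]
  have h : 2 * (Real.pi : ℂ) * Complex.I * ((1 : ℕ) : ℂ) / ((2 : ℕ) : ℂ)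
      = (Real.pi : ℂ) * Complex.I := by push_cast; ring
  rw [h, Complex.exp_pi_mul_I]

lemma psk_two_two : psk 2 2 = 1 := by
  rw [psk]
  have h : 2 * (Real.pi : ℂ) * Complex.I * ((2 : ℕ) : ℂ) / ((2 : ℕ) : ℂ)
      = 2 * (Real.pi : ℂ) * Complex.I := by push_cast; ring
  rw [h]
  simpa [mul_comm, mul_assoc] using Complex.exp_two_pi_mul_I

lemma re_mul_conj_one (x y : ℝ) :
    (((x : ℂ) + (y : ℂ) * Complex.I) * (starRingEnd ℂ) 1).re = x := by simp

lemma re_mul_conj_neg_one (x y : ℝ) :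
    (((x : ℂ) + (y : ℂ) * Complex.I) * (starRingEnd ℂ) (-1)).re = -x := by simp

def bigF (M : ℕ) (m : ℝ) (u : (ℝ × ℝ) × ((Fin (M - 1) → ℝ) × (Fin (M - 1) → ℝ))) : ℝ :=
  (rexp (m + Real.sqrt m * u.1.1) - rexp (-(m + Real.sqrt m * u.1.1))) /
  (rexp (m + Real.sqrt m * u.1.1) + rexp (-(m + Real.sqrt m * u.1.1)) +
   ∑ j, (rexp (-(Real.sqrt m * u.2.1 j)) + rexp (Real.sqrt m * u.2.1 j)))

lemma EKM_two_eq (M : ℕ) (ν : ℝ) :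
    EKM 2 M ν = ∫ u, bigF M (ν * Real.log (2 * M)) u ∂(seMeasure M) := by
  unfold EKM bigF
  congr 1
  funext u
  have h12 : (Finset.Icc 1 2 : Finset ℕ) = {1, 2} := rfl
  rw [h12]
  simp only [Finset.sum_insert (by decide : (1:ℕ) ∉ ({2} : Finset ℕ)), Finset.sum_singleton,
    psk_two_one, psk_two_two, re_mul_conj_one, re_mul_conj_neg_one, Complex.neg_re,
    Complex.one_re, Nat.cast_ofNat]
  ring_nf

end SEAux
namespace SEAux
open Real

lemma bigF_measurable (M : ℕ) (m : ℝ) : Measurable (bigF M m) := by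
  unfold bigF
  fun_prop

lemma abs_bigF_le_one (M : ℕ) (m : ℝ) (u : (ℝ × ℝ) × ((Fin (M - 1) → ℝ) × (Fin (M - 1) → ℝ))) :
    |bigF M m u| ≤ 1 := by
  unfold bigF
  set A := rexp (m + Real.sqrt m * u.1.1) with hA
  set B := rexp (-(m + Real.sqrt m * u.1.1)) with hB
  set S := ∑ j, (rexp (-(Real.sqrt m * u.2.1 j)) + rexp (Real.sqrt m * u.2.1 j)) with hS
  have hApos : 0 < A := Real.exp_pos _
  have hBpos : 0 < B := Real.exp_pos _
  have hSpos : 0 ≤ S :=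
    Finset.sum_nonneg fun j _ => by positivity
  have hD : 0 < A + B + S := by linarith
  rw [abs_div, abs_of_pos hD, div_le_one hD]
  have := abs_sub_abs_le_abs_sub A B
  calc |A - B| ≤ |A| + |B| := abs_sub _ _
    _ = A + B := by rw [abs_of_pos hApos, abs_of_pos hBpos]
    _ ≤ A + B + S := by linarith

lemma bigF_integrable (M : ℕ) (m : ℝ) : Integrable (bigF M m) (seMeasure M) := by
  refine Integrable.mono' (integrable_const (1 : ℝ))
    (bigF_measurable M m).aestronglyMeasurable ?_
  exact Filter.Eventually.of_forall fun u => by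
    simpa [Real.norm_eq_abs] using abs_bigF_le_one M m u

end SEAux
namespace SEAux
open Real

lemma pointwise_bound (m c s S x : ℝ) (hc : 0 ≤ c) (hS : 0 ≤ S) :
    1 - ((if x < -s then (2 : ℝ) else 0)
        + (2 * rexp (-(2 * m) + 2 * (c * s)) + rexp (-m + c * s) * S))
      ≤ (rexp (m + c * x) - rexp (-(m + c * x))) / (rexp (m + c * x) + rexp (-(m + c * x)) + S) := by
  have hApos : 0 < rexp (m + c * x) := Real.exp_pos _
  have hBpos : 0 < rexp (-(m + c * x)) := Real.exp_pos _
  have hD : 0 < rexp (m + c * x) + rexp (-(m + c * x)) + S := by linarith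
  have hK2pos : 0 ≤ 2 * rexp (-(2 * m) + 2 * (c * s)) := by positivity
  have hK3Spos : 0 ≤ rexp (-m + c * s) * S := mul_nonneg (Real.exp_pos _).le hS
  by_cases hxs : x < -s
  · rw [if_pos hxs]
    have hge : -1 ≤ (rexp (m + c * x) - rexp (-(m + c * x)))
        / (rexp (m + c * x) + rexp (-(m + c * x)) + S) := by
      rw [le_div_iff₀ hD]
      nlinarith
    nlinarith
  · rw [if_neg hxs]
    push_neg at hxs
    have hxs' : -x ≤ s := by linarith
    have heq : 1 - (rexp (m + c * x) - rexp (-(m + c * x)))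
        / (rexp (m + c * x) + rexp (-(m + c * x)) + S)
        = (2 * rexp (-(m + c * x)) + S) / (rexp (m + c * x) + rexp (-(m + c * x)) + S) := by
      field_simp
      ring
    have hstep1 : (2 * rexp (-(m + c * x)) + S) / (rexp (m + c * x) + rexp (-(m + c * x)) + S)
        ≤ (2 * rexp (-(m + c * x)) + S) / rexp (m + c * x) := by
      apply div_le_div_of_nonneg_left (by linarith) hApos
      linarith
    have hcx : -(c * x) ≤ c * s := by
      have := mul_le_mul_of_nonneg_left hxs' hc
      nlinarith
    have hstep2 : (2 * rexp (-(m + c * x)) + S) / rexp (m + c * x)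
        ≤ 2 * rexp (-(2 * m) + 2 * (c * s)) + rexp (-m + c * s) * S := by
      rw [div_eq_mul_inv, ← Real.exp_neg]
      have b1 : rexp (-(m + c * x)) * rexp (-(m + c * x)) ≤ rexp (-(2 * m) + 2 * (c * s)) := by
        rw [← Real.exp_add]
        apply Real.exp_le_exp.2
        nlinarith
      have b2 : rexp (-(m + c * x)) ≤ rexp (-m + c * s) := by
        apply Real.exp_le_exp.2
        nlinarith
      nlinarith [Real.exp_pos (-(m + c * x)), mul_le_mul_of_nonneg_left b2 hS]
    linarith [heq ▸ (hstep1.trans hstep2)]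

lemma EKM_two_ge (M : ℕ) (hM : 1 ≤ M) (ν : ℝ) (hν : 0 ≤ ν) (s : ℝ) (hs : 0 < s) :
    1 - (2 * rexp (-(s ^ 2) / 2)
        + 2 * rexp (-(2 * (ν * Real.log (2 * M))) + 2 * (Real.sqrt (ν * Real.log (2 * M)) * s))
        + rexp (-(ν * Real.log (2 * M)) + Real.sqrt (ν * Real.log (2 * M)) * s)
            * (((M - 1 : ℕ) : ℝ) * (2 * rexp (ν * Real.log (2 * M) / 2))))
      ≤ EKM 2 M ν := by
  have hlog : 0 ≤ Real.log (2 * M) := by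
    apply Real.log_nonneg
    have h1 : (1 : ℝ) ≤ (M : ℝ) := by exact_mod_cast hM
    linarith
  have hm : 0 ≤ ν * Real.log (2 * M) := mul_nonneg hν hlog
  obtain ⟨m, hm_def, hm0⟩ : ∃ m : ℝ, m = ν * Real.log (2 * M) ∧ 0 ≤ m := ⟨_, rfl, hm⟩
  obtain ⟨c, hc_def, hc0, hc2⟩ : ∃ c : ℝ, c = Real.sqrt m ∧ 0 ≤ c ∧ c ^ 2 = m :=
    ⟨_, rfl, Real.sqrt_nonneg _, Real.sq_sqrt hm0⟩
  rw [EKM_two_eq, ← hm_def, ← hc_def]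
  set Sf : (ℝ × ℝ) × ((Fin (M - 1) → ℝ) × (Fin (M - 1) → ℝ)) → ℝ :=
    fun u => ∑ j, (rexp (-(c * u.2.1 j)) + rexp (c * u.2.1 j)) with hSf_def
  set g1 : (ℝ × ℝ) × ((Fin (M - 1) → ℝ) × (Fin (M - 1) → ℝ)) → ℝ :=
    fun u => if u.1.1 < -s then (2 : ℝ) else 0 with hg1_def
  have hcomp_int : ∀ t : ℝ, ∀ j : Fin (M - 1),
      Integrable (fun u : (ℝ × ℝ) × ((Fin (M - 1) → ℝ) × (Fin (M - 1) → ℝ)) =>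
        rexp (t * u.2.1 j)) (seMeasure M) := fun t j =>
    integrable_comp_y (M := M) j (f := fun x => rexp (t * x))
      (integrable_exp_mul_gaussianReal t)
      (integrable_exp_mul_gaussianReal t).aestronglyMeasurable
  have hterm_int : ∀ j : Fin (M - 1),
      Integrable (fun u : (ℝ × ℝ) × ((Fin (M - 1) → ℝ) × (Fin (M - 1) → ℝ)) =>
        rexp (-(c * u.2.1 j)) + rexp (c * u.2.1 j)) (seMeasure M) := by
    intro j
    have h1 := hcomp_int (-c) j
    simp only [neg_mul] at h1
    exact h1.add (hcomp_int c j)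
  have hSf_int : Integrable Sf (seMeasure M) :=
    integrable_finset_sum _ fun j _ => hterm_int j
  have hSf_integral : ∫ u, Sf u ∂(seMeasure M)
      = ((M - 1 : ℕ) : ℝ) * (2 * rexp (m / 2)) := by
    rw [hSf_def, integral_finset_sum _ fun j _ => hterm_int j]
    have hterm : ∀ j : Fin (M - 1),
        (∫ u, (rexp (-(c * (u.2.1 j))) + rexp (c * (u.2.1 j))) ∂(seMeasure M))
          = 2 * rexp (m / 2) := by
      intro j
      have h1 : (fun u : (ℝ × ℝ) × ((Fin (M - 1) → ℝ) × (Fin (M - 1) → ℝ)) =>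
          rexp (-(c * u.2.1 j)) + rexp (c * u.2.1 j))
          = fun u => (fun x => rexp (-c * x) + rexp (c * x)) (u.2.1 j) := by
        funext u; simp [neg_mul]
      rw [h1, integral_comp_y (M := M) j (f := fun x => rexp (-c * x) + rexp (c * x))
        ((integrable_exp_mul_gaussianReal (-c)).add
          (integrable_exp_mul_gaussianReal c)).aestronglyMeasurable,
        integral_add (integrable_exp_mul_gaussianReal (-c))
          (integrable_exp_mul_gaussianReal c),
        integral_exp_mul_gaussianReal, integral_exp_mul_gaussianReal]
      rw [neg_pow, hc2]
      norm_num
      ring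
    simp_rw [hterm]
    simp [Finset.card_univ]
  have hind_eq : (fun x : ℝ => if x < -s then (2 : ℝ) else 0)
      = (Set.Iio (-s)).indicator (fun _ => (2 : ℝ)) := by
    funext x
    rw [Set.indicator_apply]
    simp [Set.mem_Iio]
  have hind_int : Integrable (fun x : ℝ => if x < -s then (2 : ℝ) else 0)
      (gaussianReal 0 1) := by
    rw [hind_eq]
    exact (integrable_const (2 : ℝ)).indicator measurableSet_Iio
  have hg1_int : Integrable g1 (seMeasure M) :=
    integrable_comp_x (f := fun x => if x < -s then (2 : ℝ) else 0)
      hind_int hind_int.aestronglyMeasurable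
  have hg1_integral : ∫ u, g1 u ∂(seMeasure M)
      = ((gaussianReal 0 1) (Set.Iio (-s))).toReal * 2 := by
    rw [hg1_def, integral_comp_x (M := M) (f := fun x => if x < -s then (2 : ℝ) else 0)
      hind_int.aestronglyMeasurable, hind_eq,
      integral_indicator_const _ measurableSet_Iio]
    simp [mul_comm]
    rfl
  have hK3Sf_int : Integrable (fun u => rexp (-m + c * s) * Sf u) (seMeasure M) :=
    hSf_int.const_mul _
  have hK_int : Integrable
      (fun u => 2 * rexp (-(2 * m) + 2 * (c * s)) + rexp (-m + c * s) * Sf u)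
      (seMeasure M) := by
    exact (integrable_const _).add hK3Sf_int
  have hh_int : Integrable
      (fun u => g1 u + (2 * rexp (-(2 * m) + 2 * (c * s)) + rexp (-m + c * s) * Sf u))
      (seMeasure M) := by
    exact hg1_int.add hK_int
  have hpt : ∀ u, 1 - (g1 u + (2 * rexp (-(2 * m) + 2 * (c * s)) + rexp (-m + c * s) * Sf u))
      ≤ bigF M m u := by
    intro u
    have hS : 0 ≤ Sf u := Finset.sum_nonneg fun j _ => by positivity
    have h := pointwise_bound m c s (Sf u) u.1.1 hc0 hS
    rw [hg1_def]
    unfold bigF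
    rw [← hc_def]
    simpa [hSf_def] using h
  have hmono : ∫ u, (1 - (g1 u + (2 * rexp (-(2 * m) + 2 * (c * s))
        + rexp (-m + c * s) * Sf u))) ∂(seMeasure M)
      ≤ ∫ u, bigF M m u ∂(seMeasure M) :=
    integral_mono ((integrable_const (1 : ℝ)).sub hh_int) (bigF_integrable M m) hpt
  have hsplit : ∫ u, (1 - (g1 u + (2 * rexp (-(2 * m) + 2 * (c * s))
        + rexp (-m + c * s) * Sf u))) ∂(seMeasure M)
      = 1 - (((gaussianReal 0 1) (Set.Iio (-s))).toReal * 2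
          + (2 * rexp (-(2 * m) + 2 * (c * s))
            + rexp (-m + c * s) * (((M - 1 : ℕ) : ℝ) * (2 * rexp (m / 2))))) := by
    rw [integral_sub (integrable_const (1 : ℝ)) hh_int, integral_const]
    simp only [measure_univ, probReal_univ, ENNReal.toReal_one, smul_eq_mul, one_mul]
    rw [integral_add hg1_int hK_int, integral_add (integrable_const _) hK3Sf_int,
      integral_const]
    simp only [measure_univ, probReal_univ, ENNReal.toReal_one, smul_eq_mul, one_mul]
    rw [integral_const_mul, hSf_integral, hg1_integral]
  rw [hsplit] at hmono
  refine le_trans ?_ hmono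
  have htail : ((gaussianReal 0 1) (Set.Iio (-s))).toReal ≤ rexp (-(s ^ 2) / 2) :=
    gaussianReal_tail s hs
  have hK3S : 0 ≤ rexp (-m + c * s) * (((M - 1 : ℕ) : ℝ) * (2 * rexp (m / 2))) := by positivity
  nlinarith

end SEAux
namespace SEAux
open Real

lemma sqrt_le_self_of_one_le {L : ℝ} (hL1 : 1 ≤ L) : Real.sqrt L ≤ L := by
  have hL0 : (0:ℝ) ≤ L := by linarith
  have h1s : 1 ≤ Real.sqrt L := by
    rw [show (1:ℝ) = Real.sqrt 1 by simp]
    exact Real.sqrt_le_sqrt hL1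
  nlinarith [Real.sq_sqrt hL0, Real.sqrt_nonneg L]

end SEAux


set_option maxHeartbeats 1000000 in
/-- **`E_{2,M}(ν)` approaches 1 when `ν > 2 + δ`** (BPSK case). For every `ν_max > 2`
there is `κ₂ > 0` (depending only on `ν_max`) such that for every `δ ∈ (0,1/2)` and every
`ν ∈ (2+δ, ν_max]`, for all sufficiently large `M`:
`E_{2,M}(ν) ≥ 1 − (2M)^{−κ₂δ²}/(δ√(ln(2M)))`. -/
theorem EKM_two_lower_bound_large_nu (νmax : ℝ) (hνmax : 2 < νmax) :
    ∃ κ₂ : ℝ, 0 < κ₂ ∧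
      ∀ δ : ℝ, 0 < δ → δ < 1/2 →
      ∀ ν : ℝ, 2 + δ < ν → ν ≤ νmax →
      ∃ M₀ : ℕ, ∀ M : ℕ, M₀ ≤ M →
        1 - ((2 : ℝ) * M) ^ (-(κ₂ * δ ^ 2)) / (δ * Real.sqrt (Real.log ((2 : ℝ) * M)))
          ≤ EKM 2 M ν := by
  open SEAux Real in
  refine ⟨1 / (64 * νmax), by positivity, ?_⟩
  intro δ hδ0 hδhalf ν hνlow hνhigh
  have hν2 : 2 < ν := by linarith
  have hν0 : 0 < ν := by linarith
  have hνmax0 : 0 < νmax := by linarith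
  set a : ℝ := δ ^ 2 / (32 * νmax) with ha_def
  have ha0 : 0 < a := by positivity
  refine ⟨max 2 ⌈Real.exp (80 * δ / a ^ 2)⌉₊, fun M hM => ?_⟩
  have hM2 : 2 ≤ M := le_trans (le_max_left _ _) hM
  have hMc : Real.exp (80 * δ / a ^ 2) ≤ (M : ℝ) :=
    le_trans (Nat.le_ceil _) (Nat.cast_le.2 (le_trans (le_max_right _ _) hM))
  have hM1R : (2 : ℝ) ≤ (M : ℝ) := by exact_mod_cast hM2
  have h2Mpos : (0 : ℝ) < 2 * M := by linarith
  set L : ℝ := Real.log (2 * M) with hL_def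
  have hL1 : 1 ≤ L := by
    rw [hL_def, show (1:ℝ) = Real.log (Real.exp 1) by rw [Real.log_exp]]
    apply Real.log_le_log (Real.exp_pos 1)
    nlinarith [Real.exp_one_lt_d9]
  have hL0 : 0 < L := lt_of_lt_of_le one_pos hL1
  have hL80 : 80 * δ / a ^ 2 ≤ L := by
    have h1 : Real.log (Real.exp (80 * δ / a ^ 2)) ≤ Real.log (M : ℝ) :=
      Real.log_le_log (Real.exp_pos _) hMc
    rw [Real.log_exp] at h1
    have h2 : Real.log (M : ℝ) ≤ L := by
      rw [hL_def]
      apply Real.log_le_log (by linarith) (by linarith)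
    linarith
  have hsqν : 0 < Real.sqrt ν := Real.sqrt_pos.2 hν0
  have hsqL : 0 < Real.sqrt L := Real.sqrt_pos.2 hL0
  set s : ℝ := δ * Real.sqrt L / (4 * Real.sqrt ν) with hs_def
  have hs0 : 0 < s := by positivity
  have hLL : Real.sqrt L * Real.sqrt L = L := Real.mul_self_sqrt hL0.le
  have hνν : Real.sqrt ν * Real.sqrt ν = ν := Real.mul_self_sqrt hν0.le
  have hsqrtmul : Real.sqrt (ν * L) = Real.sqrt ν * Real.sqrt L := Real.sqrt_mul hν0.le L
  have hcs : Real.sqrt (ν * L) * s = δ * L / 4 := by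
    rw [hsqrtmul, hs_def]
    field_simp
    linear_combination hLL
  have hs2 : s ^ 2 = δ ^ 2 * L / (16 * ν) := by
    rw [hs_def, div_pow, mul_pow, mul_pow]
    rw [Real.sq_sqrt hL0.le, Real.sq_sqrt hν0.le]
    norm_num
  -- apply the core bound
  refine le_trans ?_ (EKM_two_ge M (by omega) ν hν0.le s hs0)
  rw [← hL_def]
  refine sub_le_sub_left ?_ 1
  -- bound each of the three terms by rexp (-(a * L))
  have haL : 0 ≤ a * L := by positivity
  have hb1 : 2 * rexp (-(s ^ 2) / 2) ≤ 2 * rexp (-(a * L)) := by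
    have h1 : a * L ≤ s ^ 2 / 2 := by
      rw [hs2, ha_def]
      rw [div_mul_eq_mul_div, div_div]
      apply div_le_div_of_nonneg_left (by positivity) (by positivity)
      nlinarith
    have := Real.exp_le_exp.2 (by linarith : -(s ^ 2) / 2 ≤ -(a * L))
    linarith
  have hb2 : 2 * rexp (-(2 * (ν * L)) + 2 * (Real.sqrt (ν * L) * s)) ≤ 2 * rexp (-(a * L)) := by
    have h1 : -(2 * (ν * L)) + 2 * (Real.sqrt (ν * L) * s) ≤ -(a * L) := by
      rw [hcs]
      have ha1 : a ≤ 1 := by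
        rw [ha_def]
        rw [div_le_one (by positivity)]
        nlinarith
      nlinarith
    have := Real.exp_le_exp.2 h1
    linarith
  have hb3 : rexp (-(ν * L) + Real.sqrt (ν * L) * s)
      * (((M - 1 : ℕ) : ℝ) * (2 * rexp (ν * L / 2))) ≤ rexp (-(a * L)) := by
    have hMsub : ((M - 1 : ℕ) : ℝ) ≤ (M : ℝ) := by
      exact_mod_cast Nat.sub_le M 1
    have hstep : rexp (-(ν * L) + Real.sqrt (ν * L) * s)
        * (((M - 1 : ℕ) : ℝ) * (2 * rexp (ν * L / 2)))
        ≤ (2 * M) * (rexp (-(ν * L) + δ * L / 4) * rexp (ν * L / 2)) := by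
      rw [hcs]
      have e1 : 0 < rexp (-(ν * L) + δ * L / 4) := Real.exp_pos _
      have e2 : 0 < rexp (ν * L / 2) := Real.exp_pos _
      have hmul := mul_le_mul_of_nonneg_right hMsub
        (by positivity : (0:ℝ) ≤ 2 * (rexp (-(ν * L) + δ * L / 4) * rexp (ν * L / 2)))
      nlinarith [hmul]
    refine hstep.trans ?_
    have h2M : (2 : ℝ) * M = rexp L := by
      rw [hL_def, Real.exp_log h2Mpos]
    rw [h2M, ← Real.exp_add, ← Real.exp_add]
    apply Real.exp_le_exp.2
    have ha4 : a ≤ δ / 4 := by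
      rw [ha_def, div_le_div_iff₀ (by positivity) (by norm_num)]
      nlinarith
    nlinarith
  -- the total is at most `5 exp(-aL)`, which is at most the displayed quantity
  have htot : 2 * rexp (-(s ^ 2) / 2)
      + 2 * rexp (-(2 * (ν * L)) + 2 * (Real.sqrt (ν * L) * s))
      + rexp (-(ν * L) + Real.sqrt (ν * L) * s)
          * (((M - 1 : ℕ) : ℝ) * (2 * rexp (ν * L / 2)))
      ≤ 5 * rexp (-(a * L)) := by linarith
  refine htot.trans ?_
  have hkey : 5 * (δ * Real.sqrt L) ≤ rexp (a * L / 2) := by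
    have h1 : Real.sqrt L ≤ L := sqrt_le_self_of_one_le hL1
    have h2 : 80 * δ ≤ a ^ 2 * L := by
      rw [div_le_iff₀ (by positivity)] at hL80
      linarith
    have h3 : 1 + a * L / 4 ≤ rexp (a * L / 4) := by
      have := Real.add_one_le_exp (a * L / 4)
      linarith
    have h4 : rexp (a * L / 4) * rexp (a * L / 4) = rexp (a * L / 2) := by
      rw [← Real.exp_add]; congr 1; ring
    have h5 : (a * L / 4) ^ 2 ≤ rexp (a * L / 2) := by
      nlinarith [haL]
    have h6 : 5 * (δ * Real.sqrt L) ≤ 5 * (δ * L) := by nlinarith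
    have h7 : 5 * (δ * L) ≤ (a * L / 4) ^ 2 := by nlinarith
    linarith
  have hrpow : ((2 : ℝ) * M) ^ (-(1 / (64 * νmax) * δ ^ 2)) = rexp (-(a / 2 * L)) := by
    rw [Real.rpow_def_of_pos h2Mpos, ← hL_def]
    congr 1
    rw [ha_def]
    field_simp
    ring
  rw [hrpow, le_div_iff₀ (by positivity)]
  calc 5 * rexp (-(a * L)) * (δ * Real.sqrt L)
      = (5 * (δ * Real.sqrt L)) * rexp (-(a * L)) := by ring
    _ ≤ rexp (a * L / 2) * rexp (-(a * L)) :=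
        mul_le_mul_of_nonneg_right hkey (Real.exp_pos _).le
    _ = rexp (-(a / 2 * L)) := by rw [← Real.exp_add]; congr 1; ring
end
end

section
/- Let K ≥ 4 be a power of 2 and let κ̃ ∈ (0,2). Then there exists a constant α_K > 0 (depending only on K and κ̃) such that for every δ̃ ∈ (0,1) with κ̃ ≤ 2 − δ̃ and every ν with κ̃ ≤ ν < 2 − δ̃, there exists M₀ such that for all M ≥ M₀, E_{K,M}(ν) ≤ M^{−α_K·δ̃²}. -/
open MeasureTheory ProbabilityTheory Finset

noncomputable section

open Real
open scoped NNReal ENNReal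
set_option maxHeartbeats 1000000

section Aux

lemma psk_exp (K k : ℕ) : psk K k = Complex.exp (((2 * π * k / K : ℝ) : ℂ) * Complex.I) := by
  unfold psk
  congr 1
  push_cast
  ring

lemma psk_re (K k : ℕ) : (psk K k).re = Real.cos (2 * π * k / K) := by
  rw [psk_exp]; exact Complex.exp_ofReal_mul_I_re _

lemma psk_im (K k : ℕ) : (psk K k).im = Real.sin (2 * π * k / K) := by
  rw [psk_exp]; exact Complex.exp_ofReal_mul_I_im _

lemma psk_sq (K k : ℕ) : (psk K k).re ^ 2 + (psk K k).im ^ 2 = 1 := by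
  rw [psk_re, psk_im]
  rw [add_comm]
  exact Real.sin_sq_add_cos_sq _

lemma psk_re_le_one (K k : ℕ) : (psk K k).re ≤ 1 := by
  rw [psk_re]; exact Real.cos_le_one _

lemma psk_self (K : ℕ) (hK : K ≠ 0) : psk K K = 1 := by
  rw [psk_exp]
  have : (2 * π * K / K : ℝ) = 2 * π := by
    field_simp
  rw [this]
  push_cast
  rw [show ((2:ℂ) * π) * Complex.I = 2 * π * Complex.I by ring]
  exact Complex.exp_two_pi_mul_I

lemma w_eq (K k : ℕ) (x y : ℝ) :
    (((x : ℂ) + (y : ℂ) * Complex.I) * (starRingEnd ℂ) (psk K k)).re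
      = x * (psk K k).re + y * (psk K k).im := by
  simp [Complex.mul_re, Complex.add_re, Complex.add_im]

lemma gauss_density_integral (f : ℝ → ℝ) :
    ∫ x, f x ∂(gaussianReal 0 1) = ∫ x, gaussianPDFReal 0 1 x * f x := by
  rw [gaussianReal_of_var_ne_zero _ one_ne_zero]
  rw [show gaussianPDF 0 1 = fun x => ((Real.toNNReal (gaussianPDFReal 0 1 x) : ℝ≥0) : ℝ≥0∞) from rfl]
  rw [integral_withDensity_eq_integral_smul
    ((measurable_gaussianPDFReal 0 1).real_toNNReal) f]
  congr 1; ext x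
  simp [NNReal.smul_def, Real.coe_toNNReal _ (gaussianPDFReal_nonneg 0 1 x)]

lemma gauss_density_integrable_iff (f : ℝ → ℝ) :
    Integrable f (gaussianReal 0 1) ↔
      Integrable (fun x => gaussianPDFReal 0 1 x * f x) volume := by
  rw [gaussianReal_of_var_ne_zero _ one_ne_zero]
  rw [show gaussianPDF 0 1 = fun x => ((Real.toNNReal (gaussianPDFReal 0 1 x) : ℝ≥0) : ℝ≥0∞) from rfl]
  rw [integrable_withDensity_iff_integrable_smul
    ((measurable_gaussianPDFReal 0 1).real_toNNReal)]
  constructor <;> intro h <;> refine h.congr (ae_of_all _ fun x => ?_) <;>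
    simp [NNReal.smul_def, Real.coe_toNNReal _ (gaussianPDFReal_nonneg 0 1 x)]

lemma gauss_pdf_mul_exp (c x : ℝ) :
    gaussianPDFReal 0 1 x * Real.exp (c * x)
      = (Real.sqrt (2 * π))⁻¹ * Real.exp (c ^ 2 / 2) * Real.exp (-(2⁻¹) * (x - c) ^ 2) := by
  rw [gaussianPDFReal]
  rw [mul_assoc, ← Real.exp_add,
    mul_assoc ((Real.sqrt (2 * π))⁻¹) (Real.exp (c ^ 2 / 2)), ← Real.exp_add]
  norm_num
  left; ring

lemma integrable_exp_mul_gaussianReal (c : ℝ) :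
    Integrable (fun x => Real.exp (c * x)) (gaussianReal 0 1) := by
  rw [gauss_density_integrable_iff]
  refine Integrable.congr ?_ (ae_of_all _ fun x => (gauss_pdf_mul_exp c x).symm)
  exact (((integrable_exp_neg_mul_sq (by norm_num : (0:ℝ) < 2⁻¹)).comp_sub_right c).const_mul _)

lemma integral_exp_mul_gaussianReal (c : ℝ) :
    ∫ x, Real.exp (c * x) ∂(gaussianReal 0 1) = Real.exp (c ^ 2 / 2) := by
  rw [gauss_density_integral]
  calc ∫ x, gaussianPDFReal 0 1 x * Real.exp (c * x)
      = ∫ x, (Real.sqrt (2 * π))⁻¹ * Real.exp (c ^ 2 / 2) * Real.exp (-(2⁻¹) * (x - c) ^ 2) := by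
        congr 1; ext x; exact gauss_pdf_mul_exp c x
    _ = (Real.sqrt (2 * π))⁻¹ * Real.exp (c ^ 2 / 2) * ∫ x, Real.exp (-(2⁻¹) * (x - c) ^ 2) := by
        rw [integral_const_mul]
    _ = (Real.sqrt (2 * π))⁻¹ * Real.exp (c ^ 2 / 2) * Real.sqrt (2 * π) := by
        rw [integral_sub_right_eq_self (fun x => Real.exp (-(2⁻¹) * x ^ 2)) c]
        rw [integral_gaussian]
        rw [show (π / 2⁻¹ : ℝ) = 2 * π from by ring]
    _ = Real.exp (c ^ 2 / 2) := by
        have h0 : Real.sqrt (2 * π) ≠ 0 := by positivity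
        rw [mul_right_comm, inv_mul_cancel₀ h0, one_mul]

lemma chernoff_prod (a b t : ℝ) (hab : a ^ 2 + b ^ 2 = 1) (ht : 0 ≤ t) :
    (((gaussianReal 0 1).prod (gaussianReal 0 1))
        {p : ℝ × ℝ | t ≤ p.1 * a + p.2 * b}).toReal ≤ Real.exp (-t ^ 2 / 2) := by
  have hint : Integrable (fun p : ℝ × ℝ => Real.exp (t * (p.1 * a + p.2 * b)))
      ((gaussianReal 0 1).prod (gaussianReal 0 1)) := by
    refine ((_root_.integrable_exp_mul_gaussianReal (t * a)).mul_prod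
      (_root_.integrable_exp_mul_gaussianReal (t * b))).congr (ae_of_all _ fun p => ?_)
    dsimp only; rw [← Real.exp_add]; ring_nf
  have h := measure_ge_le_exp_mul_mgf (μ := (gaussianReal 0 1).prod (gaussianReal 0 1))
    (X := fun p : ℝ × ℝ => p.1 * a + p.2 * b) (t := t) t ht hint
  have hmgf : mgf (fun p : ℝ × ℝ => p.1 * a + p.2 * b)
      ((gaussianReal 0 1).prod (gaussianReal 0 1)) t = Real.exp (t ^ 2 / 2) := by
    unfold mgf
    calc ∫ p, Real.exp (t * (p.1 * a + p.2 * b))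
            ∂((gaussianReal 0 1).prod (gaussianReal 0 1))
        = ∫ p : ℝ × ℝ, Real.exp ((t * a) * p.1) * Real.exp ((t * b) * p.2)
            ∂((gaussianReal 0 1).prod (gaussianReal 0 1)) := by
          congr 1; ext p; rw [← Real.exp_add]; ring_nf
      _ = (∫ x, Real.exp ((t * a) * x) ∂(gaussianReal 0 1))
            * ∫ y, Real.exp ((t * b) * y) ∂(gaussianReal 0 1) := integral_prod_mul (μ := gaussianReal 0 1) (ν := gaussianReal 0 1)
            (fun x => Real.exp ((t * a) * x)) (fun y => Real.exp ((t * b) * y))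
      _ = Real.exp (t ^ 2 / 2) := by
          rw [integral_exp_mul_gaussianReal, integral_exp_mul_gaussianReal, ← Real.exp_add]
          congr 1
          linear_combination (t ^ 2 / 2) * hab
  rw [hmgf, ← Real.exp_add] at h
  refine h.trans (le_of_eq ?_)
  congr 1; ring

lemma gaussian_tail_lb (s : ℝ) (hs : 0 ≤ s) :
    Real.exp (-(s + 1) ^ 2 / 2) / Real.sqrt (2 * π)
      ≤ (gaussianReal 0 1 (Set.Ici s)).toReal := by
  have hmono : ∀ x ∈ Set.Icc s (s + 1),
      Real.exp (-(s + 1) ^ 2 / 2) / Real.sqrt (2 * π) ≤ gaussianPDFReal 0 1 x := by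
    intro x hx
    rw [gaussianPDFReal]
    norm_num
    rw [div_eq_inv_mul, mul_inv]
    have h2 : Real.exp (-(s + 1) ^ 2 / 2) ≤ Real.exp (-x ^ 2 / 2) := by
      apply Real.exp_le_exp.mpr
      nlinarith [hx.1, hx.2, hs]
    have hpos : (0:ℝ) ≤ (√2)⁻¹ * (√π)⁻¹ := by positivity
    calc (√2)⁻¹ * (√π)⁻¹ * rexp (-(s + 1) ^ 2 / 2)
        ≤ (√2)⁻¹ * (√π)⁻¹ * rexp (-x ^ 2 / 2) := by gcongr
      _ = (√π)⁻¹ * (√2)⁻¹ * rexp (-x ^ 2 / 2) := by ring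
  have hIcc : (gaussianReal 0 1 (Set.Icc s (s + 1))).toReal
      = ∫ x in Set.Icc s (s + 1), gaussianPDFReal 0 1 x := by
    rw [gaussianReal_apply_eq_integral 0 one_ne_zero]
    exact ENNReal.toReal_ofReal (setIntegral_nonneg measurableSet_Icc
      fun x _ => gaussianPDFReal_nonneg 0 1 x)
  have hconst : Real.exp (-(s + 1) ^ 2 / 2) / Real.sqrt (2 * π)
      ≤ ∫ x in Set.Icc s (s + 1), gaussianPDFReal 0 1 x := by
    have h1 : (∫ x in Set.Icc s (s + 1),
        (Real.exp (-(s + 1) ^ 2 / 2) / Real.sqrt (2 * π)))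
        = Real.exp (-(s + 1) ^ 2 / 2) / Real.sqrt (2 * π) := by
      rw [setIntegral_const]
      simp [Real.volume_Icc]
    rw [← h1]
    refine setIntegral_mono_on ((integrableOn_const_iff (by simp)).mpr ?_)
      ((integrable_gaussianPDFReal 0 1).integrableOn) measurableSet_Icc hmono
    right
    rw [Real.volume_Icc]
    simp
  calc Real.exp (-(s + 1) ^ 2 / 2) / Real.sqrt (2 * π)
      ≤ (gaussianReal 0 1 (Set.Icc s (s + 1))).toReal := by rw [hIcc]; exact hconst
    _ ≤ (gaussianReal 0 1 (Set.Ici s)).toReal := by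
        apply ENNReal.toReal_mono (measure_ne_top _ _)
        exact measure_mono Set.Icc_subset_Ici_self

lemma psk_abs_re_le_one (K k : ℕ) : |(psk K k).re| ≤ 1 :=
  abs_le.mpr ⟨by nlinarith [psk_sq K k, sq_nonneg (psk K k).im], psk_re_le_one K k⟩

instance seMeasure_prob (M : ℕ) : IsProbabilityMeasure (seMeasure M) := by
  unfold seMeasure; infer_instance

lemma core_bound (K m : ℕ) (hK : 4 ≤ K) (hm : 1 ≤ m) (μR sq t s : ℝ)
    (hμR0 : 0 ≤ μR) (hsq0 : 0 ≤ sq) (ht : 0 ≤ t) (hs : 0 ≤ s) :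
    ∫ u : (ℝ × ℝ) × ((Fin m → ℝ) × (Fin m → ℝ)),
        (∑ k ∈ Finset.Icc 1 K, (psk K k).re *
            Real.exp (μR * (psk K k).re + sq * (u.1.1 * (psk K k).re + u.1.2 * (psk K k).im))) /
        ((∑ a ∈ Finset.Icc 1 K,
            Real.exp (μR * (psk K a).re + sq * (u.1.1 * (psk K a).re + u.1.2 * (psk K a).im))) +
          ∑ j : Fin m, ∑ b ∈ Finset.Icc 1 K,
            Real.exp (sq * (u.2.1 j * (psk K b).re + u.2.2 j * (psk K b).im)))
      ∂(((gaussianReal 0 1).prod (gaussianReal 0 1)).prod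
          ((Measure.pi fun _ : Fin m => gaussianReal 0 1).prod
            (Measure.pi fun _ : Fin m => gaussianReal 0 1)))
    ≤ (K : ℝ) * Real.exp (μR + sq * (t - s)) + (K : ℝ) * Real.exp (-t ^ 2 / 2)
      + Real.exp (-(Real.exp (-(s + 1) ^ 2 / 2) / Real.sqrt (2 * π)) * (m : ℝ)) := by
  classical
  have hK1 : 1 ≤ K := by omega
  set P : Measure ((ℝ × ℝ) × ((Fin m → ℝ) × (Fin m → ℝ))) :=
    ((gaussianReal 0 1).prod (gaussianReal 0 1)).prod
      ((Measure.pi fun _ : Fin m => gaussianReal 0 1).prod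
        (Measure.pi fun _ : Fin m => gaussianReal 0 1)) with hP
  haveI : IsProbabilityMeasure P := by rw [hP]; infer_instance
  set NN : (ℝ × ℝ) → ℝ := fun x => ∑ k ∈ Finset.Icc 1 K, (psk K k).re *
      Real.exp (μR * (psk K k).re + sq * (x.1 * (psk K k).re + x.2 * (psk K k).im)) with hNN
  set D1 : (ℝ × ℝ) → ℝ := fun x => ∑ a ∈ Finset.Icc 1 K,
      Real.exp (μR * (psk K a).re + sq * (x.1 * (psk K a).re + x.2 * (psk K a).im)) with hD1
  set D2 : ((Fin m → ℝ) × (Fin m → ℝ)) → ℝ := fun y => ∑ j : Fin m,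
      ∑ b ∈ Finset.Icc 1 K,
        Real.exp (sq * (y.1 j * (psk K b).re + y.2 j * (psk K b).im)) with hD2
  set f : ((ℝ × ℝ) × ((Fin m → ℝ) × (Fin m → ℝ))) → ℝ :=
    fun u => NN u.1 / (D1 u.1 + D2 u.2) with hf
  have hIccne : (Finset.Icc 1 K).Nonempty := by
    rw [Finset.nonempty_Icc]; omega
  have hD1pos : ∀ x, 0 < D1 x := fun x =>
    Finset.sum_pos (fun i _ => Real.exp_pos _) hIccne
  have hD2nn : ∀ y, 0 ≤ D2 y := fun y =>
    Finset.sum_nonneg fun j _ => Finset.sum_nonneg fun b _ => (Real.exp_pos _).le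
  have hDpos : ∀ u : (ℝ × ℝ) × ((Fin m → ℝ) × (Fin m → ℝ)),
      0 < D1 u.1 + D2 u.2 := by
    intro u; have := hD1pos u.1; have := hD2nn u.2; linarith
  have hNabs : ∀ x, |NN x| ≤ D1 x := by
    intro x
    refine (Finset.abs_sum_le_sum_abs _ _).trans (Finset.sum_le_sum fun k _ => ?_)
    rw [abs_mul, abs_of_pos (Real.exp_pos _)]
    exact mul_le_of_le_one_left (Real.exp_pos _).le (psk_abs_re_le_one K k)
  have habsf : ∀ u, |f u| ≤ 1 := by
    intro u
    rw [hf, abs_div, abs_of_pos (hDpos u), div_le_one (hDpos u)]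
    exact (hNabs u.1).trans (le_add_of_nonneg_right (hD2nn u.2))
  have hf1 : ∀ u, f u ≤ 1 := fun u => (le_abs_self _).trans (habsf u)
  set A : Set (ℝ × ℝ) :=
    {x | ∀ k ∈ Finset.Icc 1 K, x.1 * (psk K k).re + x.2 * (psk K k).im ≤ t} with hA
  set B : Set ((Fin m → ℝ) × (Fin m → ℝ)) := {y | ∃ j, s ≤ y.1 j} with hB
  have hAmeas : MeasurableSet A := by
    have : A = ⋂ k ∈ Finset.Icc 1 K,
        {x : ℝ × ℝ | x.1 * (psk K k).re + x.2 * (psk K k).im ≤ t} := by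
      ext x; simp [hA]
    rw [this]
    exact MeasurableSet.biInter (Set.to_countable _) fun k _ =>
      measurableSet_le (by fun_prop) measurable_const
  have hBmeas : MeasurableSet B := by
    have : B = ⋃ j, {y : (Fin m → ℝ) × (Fin m → ℝ) | s ≤ y.1 j} := by
      ext y; simp [hB]
    rw [this]
    exact MeasurableSet.iUnion fun j => measurableSet_le measurable_const (by fun_prop)
  set c₁ : ℝ := (K : ℝ) * Real.exp (μR + sq * (t - s)) with hc₁
  have hc₁0 : 0 ≤ c₁ := by positivity
  -- pointwise bound
  set g : ((ℝ × ℝ) × ((Fin m → ℝ) × (Fin m → ℝ))) → ℝ :=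
    fun u => c₁ + (Aᶜ ×ˢ (Set.univ : Set ((Fin m → ℝ) × (Fin m → ℝ)))).indicator
        (fun _ => (1:ℝ)) u
      + ((Set.univ : Set (ℝ × ℝ)) ×ˢ Bᶜ).indicator (fun _ => (1:ℝ)) u with hg
  have hind_nonneg : ∀ (S : Set ((ℝ × ℝ) × ((Fin m → ℝ) × (Fin m → ℝ)))) u,
      (0:ℝ) ≤ S.indicator (fun _ => (1:ℝ)) u := fun S u =>
    Set.indicator_nonneg (fun _ _ => zero_le_one) u
  have hfg : ∀ u, f u ≤ g u := by
    intro u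
    by_cases hAu : u.1 ∈ A
    · by_cases hBu : u.2 ∈ B
      · -- main bound
        obtain ⟨j, hj⟩ := hBu
        have hDge : Real.exp (sq * s) ≤ D1 u.1 + D2 u.2 := by
          have h1 : Real.exp (sq * s) ≤
              Real.exp (sq * (u.2.1 j * (psk K K).re + u.2.2 j * (psk K K).im)) := by
            rw [psk_self K (by omega)]
            simp only [Complex.one_re, Complex.one_im, mul_one, mul_zero, add_zero]
            exact Real.exp_le_exp.mpr (mul_le_mul_of_nonneg_left hj hsq0)
          have h2 : Real.exp (sq * (u.2.1 j * (psk K K).re + u.2.2 j * (psk K K).im)) ≤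
              ∑ b ∈ Finset.Icc 1 K,
                Real.exp (sq * (u.2.1 j * (psk K b).re + u.2.2 j * (psk K b).im)) :=
            Finset.single_le_sum
              (f := fun b => Real.exp (sq * (u.2.1 j * (psk K b).re + u.2.2 j * (psk K b).im)))
              (fun b _ => (Real.exp_pos _).le)
              (Finset.mem_Icc.mpr ⟨hK1, le_refl K⟩)
          have h3 : (∑ b ∈ Finset.Icc 1 K,
              Real.exp (sq * (u.2.1 j * (psk K b).re + u.2.2 j * (psk K b).im))) ≤ D2 u.2 :=
            Finset.single_le_sum
              (f := fun j' => ∑ b ∈ Finset.Icc 1 K,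
                Real.exp (sq * (u.2.1 j' * (psk K b).re + u.2.2 j' * (psk K b).im)))
              (fun j' _ => Finset.sum_nonneg fun b _ => (Real.exp_pos _).le)
              (Finset.mem_univ j)
          have := hD1pos u.1
          linarith
        have hNle : NN u.1 ≤ (K : ℝ) * Real.exp (μR + sq * t) := by
          have hterm : ∀ k ∈ Finset.Icc 1 K, (psk K k).re *
              Real.exp (μR * (psk K k).re + sq * (u.1.1 * (psk K k).re + u.1.2 * (psk K k).im))
              ≤ Real.exp (μR + sq * t) := by
            intro k hk
            rcases le_or_gt (psk K k).re 0 with hre | hre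
            · nlinarith [Real.exp_pos (μR * (psk K k).re +
                sq * (u.1.1 * (psk K k).re + u.1.2 * (psk K k).im)),
                Real.exp_pos (μR + sq * t)]
            · have harg : μR * (psk K k).re +
                  sq * (u.1.1 * (psk K k).re + u.1.2 * (psk K k).im) ≤ μR + sq * t := by
                have h1 : μR * (psk K k).re ≤ μR := by
                  nlinarith [psk_re_le_one K k]
                have h2 : sq * (u.1.1 * (psk K k).re + u.1.2 * (psk K k).im) ≤ sq * t :=
                  mul_le_mul_of_nonneg_left (hAu k hk) hsq0
                linarith
              calc (psk K k).re * Real.exp (μR * (psk K k).re +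
                    sq * (u.1.1 * (psk K k).re + u.1.2 * (psk K k).im))
                  ≤ 1 * Real.exp (μR + sq * t) :=
                    mul_le_mul (psk_re_le_one K k) (Real.exp_le_exp.mpr harg)
                      (Real.exp_pos _).le zero_le_one
                _ = Real.exp (μR + sq * t) := one_mul _
          calc NN u.1 ≤ ∑ _k ∈ Finset.Icc 1 K, Real.exp (μR + sq * t) :=
                Finset.sum_le_sum hterm
            _ = (K : ℝ) * Real.exp (μR + sq * t) := by
                rw [Finset.sum_const, Nat.card_Icc]
                simp [nsmul_eq_mul]
        have hfc : f u ≤ c₁ := by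
          rw [hf, div_le_iff₀ (hDpos u)]
          have hkey : c₁ * Real.exp (sq * s) = (K : ℝ) * Real.exp (μR + sq * t) := by
            rw [hc₁, mul_assoc, ← Real.exp_add]
            congr 2
            ring
          calc NN u.1 ≤ (K : ℝ) * Real.exp (μR + sq * t) := hNle
            _ = c₁ * Real.exp (sq * s) := hkey.symm
            _ ≤ c₁ * (D1 u.1 + D2 u.2) := mul_le_mul_of_nonneg_left hDge hc₁0
        have := hind_nonneg (Aᶜ ×ˢ Set.univ) u
        have := hind_nonneg (Set.univ ×ˢ Bᶜ) u
        rw [hg]; dsimp only; linarith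
      · have hmem : u ∈ (Set.univ : Set (ℝ × ℝ)) ×ˢ Bᶜ := by
          simp [Set.mem_prod, hBu]
        have h1 : ((Set.univ : Set (ℝ × ℝ)) ×ˢ Bᶜ).indicator (fun _ => (1:ℝ)) u = 1 :=
          Set.indicator_of_mem hmem _
        have := hind_nonneg (Aᶜ ×ˢ Set.univ) u
        have := hf1 u
        rw [hg]; dsimp only; rw [h1]; linarith
    · have hmem : u ∈ Aᶜ ×ˢ (Set.univ : Set ((Fin m → ℝ) × (Fin m → ℝ))) := by
        simp [Set.mem_prod, hAu]
      have h1 : (Aᶜ ×ˢ (Set.univ : Set ((Fin m → ℝ) × (Fin m → ℝ)))).indicator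
          (fun _ => (1:ℝ)) u = 1 := Set.indicator_of_mem hmem _
      have := hind_nonneg ((Set.univ : Set (ℝ × ℝ)) ×ˢ Bᶜ) u
      have := hf1 u
      rw [hg]; dsimp only; rw [h1]; linarith
  -- measurability
  have hWmeas : ∀ (k : ℕ), Measurable fun x : ℝ × ℝ =>
      μR * (psk K k).re + sq * (x.1 * (psk K k).re + x.2 * (psk K k).im) := fun k => by fun_prop
  have hNNmeas : Measurable NN := by
    rw [hNN]
    exact Finset.measurable_sum _ fun k _ => ((hWmeas k).exp.const_mul _)
  have hD1meas : Measurable D1 := by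
    rw [hD1]
    exact Finset.measurable_sum _ fun k _ => (hWmeas k).exp
  have hD2meas : Measurable D2 := by
    rw [hD2]
    refine Finset.measurable_sum _ fun j _ => Finset.measurable_sum _ fun b _ => ?_
    have : Measurable fun y : (Fin m → ℝ) × (Fin m → ℝ) =>
        sq * (y.1 j * (psk K b).re + y.2 j * (psk K b).im) := by fun_prop
    exact this.exp
  have hfm : Measurable f := by
    rw [hf]
    exact (hNNmeas.comp measurable_fst).div
      ((hD1meas.comp measurable_fst).add (hD2meas.comp measurable_snd))
  have hfint : Integrable f P := by
    refine Integrable.mono' (integrable_const (1:ℝ)) hfm.aestronglyMeasurable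
      (ae_of_all _ fun u => ?_)
    rw [Real.norm_eq_abs]
    exact habsf u
  have hAc : MeasurableSet (Aᶜ ×ˢ (Set.univ : Set ((Fin m → ℝ) × (Fin m → ℝ)))) :=
    hAmeas.compl.prod MeasurableSet.univ
  have hBc : MeasurableSet ((Set.univ : Set (ℝ × ℝ)) ×ˢ Bᶜ) :=
    MeasurableSet.univ.prod hBmeas.compl
  have hind1int : Integrable ((Aᶜ ×ˢ (Set.univ : Set ((Fin m → ℝ) × (Fin m → ℝ)))).indicator
      fun _ => (1:ℝ)) P := (integrable_const (1:ℝ)).indicator hAc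
  have hind2int : Integrable (((Set.univ : Set (ℝ × ℝ)) ×ˢ Bᶜ).indicator
      fun _ => (1:ℝ)) P := (integrable_const (1:ℝ)).indicator hBc
  have hgint : Integrable g P := by
    rw [hg]
    exact ((integrable_const c₁).add hind1int).add hind2int
  have hgeq : ∫ u, g u ∂P = c₁ + (P (Aᶜ ×ˢ (Set.univ : Set ((Fin m → ℝ) × (Fin m → ℝ))))).toReal
      + (P ((Set.univ : Set (ℝ × ℝ)) ×ˢ Bᶜ)).toReal := by
    simp only [hg]
    have hsum1 : Integrable (fun u : (ℝ × ℝ) × ((Fin m → ℝ) × (Fin m → ℝ)) =>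
        c₁ + (Aᶜ ×ˢ (Set.univ : Set ((Fin m → ℝ) × (Fin m → ℝ)))).indicator (fun _ => (1:ℝ)) u) P :=
      (integrable_const c₁).add hind1int
    have hconst : Integrable (fun _ : (ℝ × ℝ) × ((Fin m → ℝ) × (Fin m → ℝ)) => c₁) P :=
      integrable_const c₁
    rw [integral_add hsum1 hind2int, integral_add hconst hind1int,
        integral_const, integral_indicator_const _ hAc, integral_indicator_const _ hBc]
    simp [measure_univ]
    rfl
  have hPA : (P (Aᶜ ×ˢ (Set.univ : Set ((Fin m → ℝ) × (Fin m → ℝ))))).toReal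
      ≤ (K : ℝ) * Real.exp (-t ^ 2 / 2) := by
    rw [hP, Measure.prod_prod, measure_univ, mul_one]
    have hsub : Aᶜ ⊆ ⋃ k ∈ Finset.Icc 1 K,
        {x : ℝ × ℝ | t ≤ x.1 * (psk K k).re + x.2 * (psk K k).im} := by
      intro x hx
      rw [hA] at hx
      simp only [Set.mem_compl_iff, Set.mem_setOf_eq, not_forall] at hx
      obtain ⟨k, hk, hlt⟩ := hx
      exact Set.mem_biUnion hk (le_of_lt (not_le.mp hlt))
    have h1 : ((gaussianReal 0 1).prod (gaussianReal 0 1)) Aᶜ ≤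
        ∑ k ∈ Finset.Icc 1 K, ((gaussianReal 0 1).prod (gaussianReal 0 1))
          {x : ℝ × ℝ | t ≤ x.1 * (psk K k).re + x.2 * (psk K k).im} :=
      (measure_mono hsub).trans (measure_biUnion_finset_le _ _)
    calc (((gaussianReal 0 1).prod (gaussianReal 0 1)) Aᶜ).toReal
        ≤ (∑ k ∈ Finset.Icc 1 K, ((gaussianReal 0 1).prod (gaussianReal 0 1))
            {x : ℝ × ℝ | t ≤ x.1 * (psk K k).re + x.2 * (psk K k).im}).toReal :=
          ENNReal.toReal_mono (by
            refine (ENNReal.sum_ne_top).mpr fun k _ => measure_ne_top _ _) h1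
      _ = ∑ k ∈ Finset.Icc 1 K, (((gaussianReal 0 1).prod (gaussianReal 0 1))
            {x : ℝ × ℝ | t ≤ x.1 * (psk K k).re + x.2 * (psk K k).im}).toReal :=
          ENNReal.toReal_sum fun k _ => measure_ne_top _ _
      _ ≤ ∑ _k ∈ Finset.Icc 1 K, Real.exp (-t ^ 2 / 2) :=
          Finset.sum_le_sum fun k _ => chernoff_prod _ _ t (psk_sq K k) ht
      _ = (K : ℝ) * Real.exp (-t ^ 2 / 2) := by
          rw [Finset.sum_const, Nat.card_Icc]
          simp [nsmul_eq_mul]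
  have hPB : (P ((Set.univ : Set (ℝ × ℝ)) ×ˢ Bᶜ)).toReal
      ≤ Real.exp (-(Real.exp (-(s + 1) ^ 2 / 2) / Real.sqrt (2 * π)) * (m : ℝ)) := by
    rw [hP, Measure.prod_prod, measure_univ, one_mul]
    have hBcset : Bᶜ = (Set.pi Set.univ fun _ : Fin m => Set.Iio s)
        ×ˢ (Set.univ : Set (Fin m → ℝ)) := by
      ext y
      simp [hB, Set.mem_pi, not_le]
    rw [hBcset, Measure.prod_prod, measure_univ, mul_one, Measure.pi_pi]
    rw [Finset.prod_const, Finset.card_univ, Fintype.card_fin]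
    set q : ℝ := (gaussianReal 0 1 (Set.Ici s)).toReal with hqdef
    set qr : ℝ := Real.exp (-(s + 1) ^ 2 / 2) / Real.sqrt (2 * π) with hqrdef
    have hq : qr ≤ q := gaussian_tail_lb s hs
    have hiio : ((gaussianReal 0 1) (Set.Iio s)).toReal = 1 - q := by
      rw [← Set.compl_Ici, measure_compl measurableSet_Ici (measure_ne_top _ _), measure_univ]
      rw [ENNReal.toReal_sub_of_le prob_le_one ENNReal.one_ne_top, ENNReal.toReal_one, hqdef]
    have hqr0 : 0 ≤ qr := by
      rw [hqrdef]; positivity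
    have hqr1 : qr ≤ 1 := by
      have h1 : Real.exp (-(s + 1) ^ 2 / 2) ≤ 1 :=
        Real.exp_le_one_iff.mpr (by nlinarith [sq_nonneg (s + 1)])
      have h2 : (1:ℝ) ≤ Real.sqrt (2 * π) := by
        rw [show (1:ℝ) = Real.sqrt 1 from Real.sqrt_one.symm]
        exact Real.sqrt_le_sqrt (by nlinarith [Real.pi_gt_three])
      rw [hqrdef, div_le_one (by linarith)]
      linarith
    have hq1 : q ≤ 1 := by
      rw [hqdef]
      exact (ENNReal.toReal_le_toReal (measure_ne_top _ _) ENNReal.one_ne_top).mpr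
        prob_le_one |>.trans_eq ENNReal.toReal_one
    rw [ENNReal.toReal_pow, hiio]
    calc (1 - q) ^ m ≤ (1 - qr) ^ m := by
          apply pow_le_pow_left₀ (by linarith) (by linarith)
      _ ≤ (Real.exp (-qr)) ^ m := by
          apply pow_le_pow_left₀ (by linarith) (by linarith [Real.add_one_le_exp (-qr)])
      _ = Real.exp (-qr * m) := by
          rw [← Real.exp_nat_mul]
          congr 1
          ring
  have hfmono : (∫ u, f u ∂P) ≤ ∫ u, g u ∂P := integral_mono hfint hgint hfg
  have hfinal : (∫ u, f u ∂P) ≤ (K : ℝ) * Real.exp (μR + sq * (t - s))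
      + (K : ℝ) * Real.exp (-t ^ 2 / 2)
      + Real.exp (-(Real.exp (-(s + 1) ^ 2 / 2) / Real.sqrt (2 * π)) * (m : ℝ)) := by
    rw [hc₁] at *
    calc (∫ u, f u ∂P) ≤ ∫ u, g u ∂P := hfmono
      _ = _ := hgeq
      _ ≤ _ := by
          have := hPA; have := hPB
          apply add_le_add (add_le_add (le_refl _) hPA) hPB
  refine le_trans (le_of_eq ?_) hfinal
  simp only [hf, hNN, hD1, hD2]


lemma EKM_le_three_terms (K : ℕ) (hK : 4 ≤ K) (ν : ℝ) (hν : 0 ≤ ν) (M : ℕ) (hM : 2 ≤ M)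
    (t s : ℝ) (ht : 0 ≤ t) (hs : 0 ≤ s) :
    EKM K M ν ≤
      (K : ℝ) * Real.exp (ν * Real.log ((K : ℝ) * M) +
          Real.sqrt (ν * Real.log ((K : ℝ) * M)) * (t - s))
      + (K : ℝ) * Real.exp (-t ^ 2 / 2)
      + Real.exp (-(Real.exp (-(s + 1) ^ 2 / 2) / Real.sqrt (2 * π)) * ((M : ℝ) - 1)) := by
  have hKM1 : (1 : ℝ) ≤ (K : ℝ) * M := by
    have h1 : (1:ℝ) ≤ (K:ℝ) := by exact_mod_cast (by omega : 1 ≤ K)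
    have h2 : (1:ℝ) ≤ (M:ℝ) := by exact_mod_cast (by omega : 1 ≤ M)
    nlinarith only [h1, h2]
  have hμR0 : 0 ≤ ν * Real.log ((K:ℝ) * M) := mul_nonneg hν (Real.log_nonneg hKM1)
  have h := core_bound K (M - 1) hK (by omega) (ν * Real.log ((K:ℝ) * M))
    (Real.sqrt (ν * Real.log ((K:ℝ) * M))) t s hμR0 (Real.sqrt_nonneg _) ht hs
  rw [Nat.cast_sub (by omega : 1 ≤ M), Nat.cast_one] at h
  refine le_trans (le_of_eq ?_) h
  unfold EKM seMeasure
  simp_rw [w_eq]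

lemma exp_ge_sq_div_four {x : ℝ} (hx : 0 ≤ x) : x ^ 2 / 4 ≤ Real.exp x := by
  have h := Real.add_one_le_exp (x / 2)
  have h2 : Real.exp (x / 2) ^ 2 = Real.exp x := by
    rw [sq, ← Real.exp_add]; congr 1; ring
  nlinarith [h, hx, h2, Real.exp_pos (x / 2)]

/-- **Upper bound on `E_{K,M}(ν)` for `ν < 2 − δ̃`** (K ≥ 4 a power of 2). For every
`κ̃ ∈ (0,2)` there is `α_K > 0` (depending only on `K` and `κ̃`) such that for every
`δ̃ ∈ (0,1)` with `κ̃ ≤ 2 − δ̃`, and every `ν ∈ [κ̃, 2 − δ̃)`, for all sufficiently large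
`M`: `E_{K,M}(ν) ≤ M^{−α_K δ̃²}`. -/
theorem EKM_upper_bound_small_nu (K : ℕ) (hK : 4 ≤ K) (hKpow : ∃ m : ℕ, K = 2 ^ m)
    (κt : ℝ) (hκ0 : 0 < κt) (hκ2 : κt < 2) :
    ∃ αK : ℝ, 0 < αK ∧
      ∀ δt : ℝ, 0 < δt → δt < 1 → κt ≤ 2 - δt →
      ∀ ν : ℝ, κt ≤ ν → ν < 2 - δt →
      ∃ M₀ : ℕ, ∀ M : ℕ, M₀ ≤ M →
        EKM K M ν ≤ (M : ℝ) ^ (-(αK * δt ^ 2)) := by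
  have hsκpos : 0 < Real.sqrt κt := Real.sqrt_pos.mpr hκ0
  obtain ⟨c₀, hc₀def⟩ : ∃ x : ℝ, x = Real.sqrt κt / 4 := ⟨_, rfl⟩
  have hc₀pos : 0 < c₀ := by rw [hc₀def]; positivity
  have hsqrt2 : Real.sqrt 2 ≤ 3/2 := by
    nlinarith [Real.sq_sqrt (by norm_num : (0:ℝ) ≤ 2), Real.sqrt_nonneg 2]
  have hc₀le : c₀ ≤ 1/2 := by
    have h1 : Real.sqrt κt ≤ Real.sqrt 2 := Real.sqrt_le_sqrt hκ2.le
    rw [hc₀def]; linarith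
  refine ⟨c₀ ^ 2 / 256, by positivity, ?_⟩
  intro δt hδ0 hδ1 hκδ ν hνκ hν2
  have hν0 : 0 < ν := lt_of_lt_of_le hκ0 hνκ
  have hνle2 : ν < 2 := by linarith
  obtain ⟨β, hβdef⟩ : ∃ x : ℝ, x = c₀ * δt := ⟨_, rfl⟩
  have hβpos : 0 < β := by rw [hβdef]; positivity
  have hβle : β ≤ 1/2 := by
    rw [hβdef]
    calc c₀ * δt ≤ (1/2) * 1 := by
          apply mul_le_mul hc₀le hδ1.le hδ0.le; norm_num
      _ = 1/2 := by norm_num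
  obtain ⟨θ, hθdef⟩ : ∃ x : ℝ, x = β / 8 := ⟨_, rfl⟩
  obtain ⟨γ, hγdef⟩ : ∃ x : ℝ, x = β / 2 := ⟨_, rfl⟩
  obtain ⟨a, hadef⟩ : ∃ x : ℝ, x = c₀ ^ 2 / 256 * δt ^ 2 := ⟨_, rfl⟩
  have hθpos : 0 < θ := by rw [hθdef]; positivity
  have hγpos : 0 < γ := by rw [hγdef]; positivity
  have hγle : γ ≤ 1/4 := by rw [hγdef]; linarith
  have hθle : θ ≤ 1 := by rw [hθdef]; linarith
  have hapos : 0 < a := by rw [hadef]; positivity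
  have ha2 : a = β ^ 2 / 256 := by rw [hadef, hβdef]; ring
  have haβ : a ≤ β / 8 := by
    rw [ha2]; nlinarith [hβpos.le, hβle]
  have hθ4 : θ ^ 2 = 4 * a := by rw [hθdef, ha2]; ring
  -- F1
  have hF1 : ν - Real.sqrt (2 * ν) ≤ -β := by
    obtain ⟨r, hrdef⟩ : ∃ x : ℝ, x = Real.sqrt ν := ⟨_, rfl⟩
    have hr0 : 0 ≤ r := by rw [hrdef]; exact Real.sqrt_nonneg _
    have hr2 : r ^ 2 = ν := by rw [hrdef]; exact Real.sq_sqrt hν0.le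
    have hsm : Real.sqrt (2 * ν) = Real.sqrt 2 * r := by
      rw [hrdef, Real.sqrt_mul (by norm_num : (0:ℝ) ≤ 2)]
    have hrκ : Real.sqrt κt ≤ r := by rw [hrdef]; exact Real.sqrt_le_sqrt hνκ
    have hrle : r ≤ Real.sqrt 2 := by rw [hrdef]; exact Real.sqrt_le_sqrt hνle2.le
    have hgap : δt / 3 ≤ Real.sqrt 2 - r := by
      have h1 : (Real.sqrt 2 - r) * (Real.sqrt 2 + r) = 2 - r ^ 2 := by
        have := Real.sq_sqrt (by norm_num : (0:ℝ) ≤ 2)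
        nlinarith [this]
      have h2 : 0 ≤ (Real.sqrt 2 - r) * (3 - (Real.sqrt 2 + r)) :=
        mul_nonneg (sub_nonneg.mpr hrle) (by linarith)
      nlinarith [h1, h2, hr2, hν2]
    have hmul : Real.sqrt κt * (δt / 3) ≤ r * (Real.sqrt 2 - r) :=
      mul_le_mul hrκ hgap (by positivity) hr0
    rw [hsm, hβdef, hc₀def]
    nlinarith [hmul, mul_nonneg hsκpos.le hδ0.le, hr2]
  -- F2
  have hF2 : Real.sqrt (2 * ν) ≤ Real.sqrt ((2 - γ) * ν) + γ := by
    obtain ⟨z, hzdef⟩ : ∃ x : ℝ, x = Real.sqrt ((2 - γ) * ν) := ⟨_, rfl⟩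
    have hz0 : 0 ≤ z := by rw [hzdef]; exact Real.sqrt_nonneg _
    have hz2 : z ^ 2 = (2 - γ) * ν := by
      rw [hzdef]; exact Real.sq_sqrt (by nlinarith)
    have h2z : ν ≤ 2 * z := by nlinarith [hz2, hz0, hν0, hνle2.le, hγle]
    have h1 : 2 * ν ≤ (z + γ) ^ 2 := by
      nlinarith [hz2, mul_nonneg hγpos.le (sub_nonneg.mpr h2z)]
    rw [← hzdef]
    calc Real.sqrt (2 * ν) ≤ Real.sqrt ((z + γ) ^ 2) := Real.sqrt_le_sqrt h1
      _ = z + γ := Real.sqrt_sq (by positivity)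
  -- constants for M₀
  obtain ⟨LK, hLKdef⟩ : ∃ x : ℝ, x = Real.log K := ⟨_, rfl⟩
  have hLK0 : 0 ≤ LK := by
    rw [hLKdef]
    exact Real.log_nonneg (by exact_mod_cast (by omega : 1 ≤ K))
  obtain ⟨C, hCdef⟩ : ∃ x : ℝ, x = 1 + (40 * LK + 16) / β + (LK + 2) / a + 128 / γ ^ 2
      + 1536 * (a + 2) / γ ^ 2 := ⟨_, rfl⟩
  have hq1 : 0 ≤ (40 * LK + 16) / β := by positivity
  have hq2 : 0 ≤ (LK + 2) / a := by positivity
  have hq3 : 0 ≤ 128 / γ ^ 2 := by positivity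
  have hq4 : 0 ≤ 1536 * (a + 2) / γ ^ 2 := by positivity
  have hC1 : 1 ≤ C := by rw [hCdef]; linarith
  refine ⟨⌈Real.exp C⌉₊ + 2, ?_⟩
  intro M hM
  have hM2 : 2 ≤ M := by omega
  have hMpos : (0:ℝ) < M := by exact_mod_cast (by omega : 0 < M)
  have hMreal : Real.exp C ≤ (M : ℝ) := by
    calc Real.exp C ≤ (⌈Real.exp C⌉₊ : ℝ) := Nat.le_ceil _
      _ ≤ (M : ℝ) := by exact_mod_cast (by omega : ⌈Real.exp C⌉₊ ≤ M)
  obtain ⟨L, hLdef⟩ : ∃ x : ℝ, x = Real.log M := ⟨_, rfl⟩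
  have hCL : C ≤ L := by
    rw [hLdef, ← Real.log_exp C]
    exact Real.log_le_log (Real.exp_pos C) hMreal
  have hL1 : 1 ≤ L := by linarith [hC1, hCL]
  have hL0 : 0 ≤ L := by linarith
  have hcond1 : (40 * LK + 16) / β ≤ L := by rw [hCdef] at hCL; linarith
  have hcond2 : (LK + 2) / a ≤ L := by rw [hCdef] at hCL; linarith
  have hcond3 : 128 / γ ^ 2 ≤ L := by rw [hCdef] at hCL; linarith
  have hcond4 : 1536 * (a + 2) / γ ^ 2 ≤ L := by rw [hCdef] at hCL; linarith
  obtain ⟨t, htdef⟩ : ∃ x : ℝ, x = θ * Real.sqrt L := ⟨_, rfl⟩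
  obtain ⟨s, hsdef⟩ : ∃ x : ℝ, x = Real.sqrt ((2 - γ) * L) := ⟨_, rfl⟩
  have ht0 : 0 ≤ t := by rw [htdef]; positivity
  have hs0 : 0 ≤ s := by rw [hsdef]; exact Real.sqrt_nonneg _
  obtain ⟨L', hL'def⟩ : ∃ x : ℝ, x = Real.log ((K : ℝ) * M) := ⟨_, rfl⟩
  have hL'eq : L' = LK + L := by
    rw [hL'def, hLKdef, hLdef, Real.log_mul (by positivity) (by positivity)]
  have hL'0 : 0 ≤ L' := by rw [hL'eq]; linarith
  obtain ⟨sqv, hsqvdef⟩ : ∃ x : ℝ, x = Real.sqrt (ν * L') := ⟨_, rfl⟩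
  have hsqv0 : 0 ≤ sqv := by rw [hsqvdef]; exact Real.sqrt_nonneg _
  -- T1 exponent bound
  have hsqvt : sqv * t ≤ 2 * θ * (LK + L) := by
    have h1 : sqv ≤ Real.sqrt 2 * Real.sqrt L' := by
      rw [hsqvdef, ← Real.sqrt_mul (by norm_num : (0:ℝ) ≤ 2)]
      exact Real.sqrt_le_sqrt (mul_le_mul_of_nonneg_right hνle2.le hL'0)
    have h2 : t ≤ θ * Real.sqrt L' := by
      rw [htdef]
      have h3 : Real.sqrt L ≤ Real.sqrt L' := Real.sqrt_le_sqrt (by rw [hL'eq]; linarith)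
      exact mul_le_mul_of_nonneg_left h3 hθpos.le
    have h3 : sqv * t ≤ (Real.sqrt 2 * Real.sqrt L') * (θ * Real.sqrt L') :=
      mul_le_mul h1 h2 ht0 (by positivity)
    have h4 : Real.sqrt L' * Real.sqrt L' = L' := Real.mul_self_sqrt hL'0
    have h5 : (Real.sqrt 2 * Real.sqrt L') * (θ * Real.sqrt L') = Real.sqrt 2 * θ * L' := by
      rw [show (Real.sqrt 2 * Real.sqrt L') * (θ * Real.sqrt L')
          = Real.sqrt 2 * θ * (Real.sqrt L' * Real.sqrt L') by ring, h4]
    rw [h5] at h3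
    have h6 : Real.sqrt 2 * θ * L' ≤ 2 * θ * L' :=
      mul_le_mul_of_nonneg_right
        (mul_le_mul_of_nonneg_right (by linarith : Real.sqrt 2 ≤ 2) hθpos.le) hL'0
    have h7 : sqv * t ≤ 2 * θ * L' := le_trans h3 h6
    rw [hL'eq] at h7
    linarith only [h7]
  have hsqvs : Real.sqrt (2 * ν) * L - γ * L ≤ sqv * s := by
    have h1 : Real.sqrt ν * Real.sqrt L ≤ sqv := by
      rw [hsqvdef, ← Real.sqrt_mul hν0.le]
      refine Real.sqrt_le_sqrt (mul_le_mul_of_nonneg_left ?_ hν0.le)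
      rw [hL'eq]; linarith
    have h2 : s = Real.sqrt (2 - γ) * Real.sqrt L := by
      rw [hsdef, Real.sqrt_mul (by linarith)]
    have h3 : (Real.sqrt ν * Real.sqrt L) * (Real.sqrt (2 - γ) * Real.sqrt L)
        = Real.sqrt ((2 - γ) * ν) * L := by
      rw [show (Real.sqrt ν * Real.sqrt L) * (Real.sqrt (2 - γ) * Real.sqrt L)
          = (Real.sqrt (2 - γ) * Real.sqrt ν) * (Real.sqrt L * Real.sqrt L) by ring]
      rw [Real.mul_self_sqrt hL0, ← Real.sqrt_mul (by linarith : (0:ℝ) ≤ 2 - γ) ν]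
    have h4 : Real.sqrt (2 * ν) * L - γ * L ≤ Real.sqrt ((2 - γ) * ν) * L := by
      nlinarith only [mul_le_mul_of_nonneg_right hF2 hL0]
    have h5 : (Real.sqrt ν * Real.sqrt L) * (Real.sqrt (2 - γ) * Real.sqrt L) ≤ sqv * s := by
      rw [h2]
      exact mul_le_mul_of_nonneg_right h1 (by positivity)
    rw [h3] at h5
    linarith
  have hT1exp : LK + (ν * L' + sqv * (t - s)) ≤ -(a * L) - 2 := by
    have hβL : 40 * LK + 16 ≤ β * L := by
      rw [div_le_iff₀ hβpos] at hcond1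
      linarith [hcond1]
    have h1 : ν * L' ≤ ν * L + 2 * LK := by
      rw [hL'eq]
      nlinarith only [mul_le_mul_of_nonneg_right hνle2.le hLK0]
    have h2 : ν * L + γ * L + 2 * θ * L ≤ Real.sqrt (2 * ν) * L - (β / 4) * L := by
      have hsum : ν + γ + 2 * θ ≤ Real.sqrt (2 * ν) - β / 4 := by
        rw [hγdef, hθdef]; linarith [hF1]
      nlinarith only [mul_le_mul_of_nonneg_right hsum hL0]
    have p1 : 2 * θ * LK ≤ 2 * LK := by
      nlinarith only [mul_nonneg (sub_nonneg.mpr hθle) hLK0]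
    have p2 : a * L ≤ β / 8 * L := by
      nlinarith only [mul_nonneg (by linarith : (0:ℝ) ≤ β / 8 - a) hL0]
    have p3 : 5 * LK + 2 ≤ β / 8 * L := by linarith
    have hts : sqv * (t - s) = sqv * t - sqv * s := by ring
    linarith [hsqvt, hsqvs, h1, h2, p1, p2, p3, hts]
  have hT2exp : LK + -t ^ 2 / 2 ≤ -(a * L) - 2 := by
    have haL : LK + 2 ≤ a * L := by
      rw [div_le_iff₀ hapos] at hcond2; linarith only [hcond2]
    have ht2 : t ^ 2 = θ ^ 2 * L := by
      rw [htdef, mul_pow, Real.sq_sqrt hL0]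
    have hth : θ ^ 2 * L = 4 * (a * L) := by rw [hθ4]; ring
    rw [ht2]
    linarith only [haL, hth, mul_nonneg hapos.le hL0]
  have h128 : 128 ≤ γ ^ 2 * L := by
    rw [div_le_iff₀ (by positivity)] at hcond3; linarith only [hcond3]
  have h1536 : 1536 * (a + 2) ≤ γ ^ 2 * L := by
    rw [div_le_iff₀ (by positivity)] at hcond4; linarith only [hcond4]
  have hsle : s ≤ γ / 4 * L := by
    have h2L : 2 * L ≤ (γ / 4 * L) ^ 2 := by
      nlinarith only [mul_le_mul_of_nonneg_right h128 hL0, hL0, hL1]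
    calc s ≤ Real.sqrt (2 * L) := by
          rw [hsdef]
          refine Real.sqrt_le_sqrt ?_
          nlinarith only [mul_nonneg hγpos.le hL0]
      _ ≤ γ / 4 * L := by
          rw [show γ / 4 * L = Real.sqrt ((γ / 4 * L) ^ 2) from
            (Real.sqrt_sq (by positivity)).symm]
          exact Real.sqrt_le_sqrt h2L
  have hs2 : s ^ 2 = (2 - γ) * L := by
    rw [hsdef]
    exact Real.sq_sqrt (mul_nonneg (by linarith only [hγle]) hL0)
  have hsq1exp : (s + 1) ^ 2 / 2 ≤ L - γ / 4 * L + 1 / 2 := by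
    have hexp : (s + 1) ^ 2 = s ^ 2 + 2 * s + 1 := by ring
    rw [hexp, hs2]
    linarith only [hsle]
  have hEe : Real.exp (-(L - γ / 4 * L + 1 / 2)) ≤ Real.exp (-(s + 1) ^ 2 / 2) := by
    apply Real.exp_le_exp.mpr; linarith only [hsq1exp]
  have hsqrt2pi : Real.sqrt (2 * π) ≤ 3 := by
    nlinarith only [Real.sq_sqrt (by positivity : (0:ℝ) ≤ 2 * π),
      Real.sqrt_nonneg (2 * π), Real.pi_le_four]
  have hsqrt2pipos : 0 < Real.sqrt (2 * π) := Real.sqrt_pos.mpr (by positivity)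
  have hqrlow : Real.exp (-(L - γ / 4 * L + 1 / 2)) / 3
      ≤ Real.exp (-(s + 1) ^ 2 / 2) / Real.sqrt (2 * π) := by
    calc Real.exp (-(L - γ / 4 * L + 1 / 2)) / 3 ≤ Real.exp (-(s + 1) ^ 2 / 2) / 3 := by
          linarith only [hEe]
      _ ≤ Real.exp (-(s + 1) ^ 2 / 2) / Real.sqrt (2 * π) :=
          div_le_div_of_nonneg_left (Real.exp_pos _).le hsqrt2pipos hsqrt2pi
  have hM1 : Real.exp L / 2 ≤ (M : ℝ) - 1 := by
    have hexpL : Real.exp L = (M : ℝ) := by rw [hLdef, Real.exp_log hMpos]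
    rw [hexpL]
    have h2M : (2:ℝ) ≤ (M : ℝ) := by exact_mod_cast hM2
    linarith only [h2M]
  have hprod : Real.exp (-(L - γ / 4 * L + 1 / 2)) / 3 * (Real.exp L / 2)
      ≤ Real.exp (-(s + 1) ^ 2 / 2) / Real.sqrt (2 * π) * ((M : ℝ) - 1) :=
    mul_le_mul hqrlow hM1 (by positivity) (by positivity)
  have hsimp : Real.exp (-(L - γ / 4 * L + 1 / 2)) / 3 * (Real.exp L / 2)
      = Real.exp (γ / 4 * L - 1 / 2) / 6 := by
    rw [show Real.exp (γ / 4 * L - 1 / 2)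
        = Real.exp (-(L - γ / 4 * L + 1 / 2)) * Real.exp L by
      rw [← Real.exp_add]; congr 1; ring]
    ring
  have hehalf : Real.exp ((1:ℝ) / 2) ≤ 2 := by
    have hsq : Real.exp ((1:ℝ) / 2) * Real.exp ((1:ℝ) / 2) = Real.exp 1 := by
      rw [← Real.exp_add]; norm_num
    nlinarith only [hsq, Real.exp_one_lt_d9, Real.exp_pos ((1:ℝ) / 2)]
  have hhalf : (1:ℝ) / 2 ≤ Real.exp (-((1:ℝ) / 2)) := by
    rw [Real.exp_neg]
    have h := inv_anti₀ (Real.exp_pos ((1:ℝ)/2)) hehalf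
    linarith only [h]
  have hsplit : Real.exp (γ / 4 * L) * (1 / 2) ≤ Real.exp (γ / 4 * L - 1 / 2) := by
    rw [show γ / 4 * L - 1 / 2 = γ / 4 * L + -((1:ℝ) / 2) by ring, Real.exp_add]
    exact mul_le_mul_of_nonneg_left hhalf (Real.exp_pos _).le
  have hexpsq : (γ / 4 * L) ^ 2 / 4 ≤ Real.exp (γ / 4 * L) :=
    exp_ge_sq_div_four (by positivity)
  have hfinal3 : a * L + 2
      ≤ Real.exp (-(s + 1) ^ 2 / 2) / Real.sqrt (2 * π) * ((M : ℝ) - 1) := by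
    have hchain : γ ^ 2 * (L * L) / 768
        ≤ Real.exp (-(s + 1) ^ 2 / 2) / Real.sqrt (2 * π) * ((M : ℝ) - 1) := by
      calc γ ^ 2 * (L * L) / 768 = (γ / 4 * L) ^ 2 / 4 * (1 / 12) := by ring
        _ ≤ Real.exp (γ / 4 * L) * (1 / 12) := by
            apply mul_le_mul_of_nonneg_right hexpsq; norm_num
        _ = Real.exp (γ / 4 * L) * (1 / 2) / 6 := by ring
        _ ≤ Real.exp (γ / 4 * L - 1 / 2) / 6 := by linarith only [hsplit]
        _ = Real.exp (-(L - γ / 4 * L + 1 / 2)) / 3 * (Real.exp L / 2) := hsimp.symm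
        _ ≤ _ := hprod
    have hquad : a * L + 2 ≤ γ ^ 2 * (L * L) / 768 := by
      nlinarith only [mul_le_mul_of_nonneg_right h1536 hL0, hL1, hapos.le,
        mul_nonneg hapos.le hL0, hL0]
    linarith only [hquad, hchain]
  -- combine
  have hbound := EKM_le_three_terms K hK ν hν0.le M hM2 t s ht0 hs0
  rw [← hL'def, ← hsqvdef] at hbound
  have hKpos : (0:ℝ) < K := by exact_mod_cast (by omega : 0 < K)
  have hexpK : (K:ℝ) = Real.exp LK := by rw [hLKdef, Real.exp_log hKpos]
  have hT1 : (K:ℝ) * Real.exp (ν * L' + sqv * (t - s)) ≤ Real.exp (-(a * L) - 2) := by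
    rw [hexpK, ← Real.exp_add]
    exact Real.exp_le_exp.mpr hT1exp
  have hT2 : (K:ℝ) * Real.exp (-t ^ 2 / 2) ≤ Real.exp (-(a * L) - 2) := by
    rw [hexpK, ← Real.exp_add]
    exact Real.exp_le_exp.mpr hT2exp
  have hT3 : Real.exp (-(Real.exp (-(s + 1) ^ 2 / 2) / Real.sqrt (2 * π)) * ((M:ℝ) - 1))
      ≤ Real.exp (-(a * L) - 2) := by
    apply Real.exp_le_exp.mpr
    nlinarith only [hfinal3]
  have h3e : Real.exp (-(a * L) - 2) * 3 ≤ Real.exp (-(a * L)) := by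
    have h2e : (3:ℝ) ≤ Real.exp 2 := by nlinarith only [Real.add_one_le_exp (2:ℝ)]
    have hinv : Real.exp (-(a * L) - 2) * Real.exp 2 = Real.exp (-(a * L)) := by
      rw [← Real.exp_add]; congr 1; ring
    nlinarith only [h2e, hinv, Real.exp_pos (-(a * L) - 2)]
  have hrpow : (M : ℝ) ^ (-(c₀ ^ 2 / 256 * δt ^ 2)) = Real.exp (-(a * L)) := by
    rw [Real.rpow_def_of_pos hMpos, ← hLdef, hadef]
    congr 1; ring
  calc EKM K M ν
      ≤ (K:ℝ) * Real.exp (ν * L' + sqv * (t - s)) + (K:ℝ) * Real.exp (-t ^ 2 / 2)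
        + Real.exp (-(Real.exp (-(s + 1) ^ 2 / 2) / Real.sqrt (2 * π)) * ((M:ℝ) - 1)) :=
        hbound
    _ ≤ Real.exp (-(a * L) - 2) + Real.exp (-(a * L) - 2) + Real.exp (-(a * L) - 2) := by
        linarith only [hT1, hT2, hT3]
    _ ≤ Real.exp (-(a * L)) := by linarith only [h3e]
    _ = (M : ℝ) ^ (-(c₀ ^ 2 / 256 * δt ^ 2)) := hrpow.symm
end Aux
end
end

section
/- Let K ≥ 4 be a multiple of 4, μ > 0, and set u̲ = −√μ/(1 + cot(2π/K)). Then for all reals u, v with u ≥ u̲ and v ≥ u̲, Σ_{k=−K/4+1}^{K/4} cos(2πk/K)·sinh( μ·cos(2πk/K) + √μ·(u·cos(2πk/K) + v·sin(2πk/K)) ) ≥ 0. -/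
open Finset

/-- **Non-negativity of the integrand of I₁.**
For `K ≥ 4` a multiple of 4, `μ > 0`, and `u, v ≥ u̲ = −√μ/(1 + cot(2π/K))`,
`∑_{k=−K/4+1}^{K/4} cos(2πk/K)·sinh(μ cos(2πk/K) + √μ(u cos(2πk/K) + v sin(2πk/K))) ≥ 0`. -/
theorem I1_integrand_nonneg (K : ℕ) (hK : 4 ≤ K) (hK4 : 4 ∣ K) (μ : ℝ) (hμ : 0 < μ)
    (u v : ℝ)
    (hu : -Real.sqrt μ / (1 + Real.cot (2 * Real.pi / K)) ≤ u)
    (hv : -Real.sqrt μ / (1 + Real.cot (2 * Real.pi / K)) ≤ v) :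
    0 ≤ ∑ k ∈ Finset.Icc (1 - (K : ℤ)/4) ((K : ℤ)/4),
      Real.cos (2 * Real.pi * k / K) *
        Real.sinh (μ * Real.cos (2 * Real.pi * k / K)
          + Real.sqrt μ * (u * Real.cos (2 * Real.pi * k / K)
              + v * Real.sin (2 * Real.pi * k / K))) := by
  obtain ⟨M, hKM⟩ := hK4
  have hM1 : 1 ≤ M := by omega
  have hKZ : (K : ℤ) = 4 * M := by exact_mod_cast hKM
  have hdiv : (K : ℤ) / 4 = (M : ℤ) := by omega
  have hMR : (0:ℝ) < (M : ℝ) := by exact_mod_cast hM1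
  have hKR : (K : ℝ) = 4 * (M : ℝ) := by exact_mod_cast hKM
  have hK0 : (0:ℝ) < K := by positivity
  have pi_pos := Real.pi_pos
  -- cot (2π/K) ≥ 0
  have hxle : 2 * Real.pi / K ≤ Real.pi / 2 := by
    rw [div_le_div_iff₀ hK0 two_pos]
    have : (4:ℝ) ≤ K := by exact_mod_cast hK
    nlinarith
  have hxpos : 0 < 2 * Real.pi / K := by positivity
  have hcot : 0 ≤ Real.cot (2 * Real.pi / K) := by
    rw [Real.cot_eq_cos_div_sin]
    apply div_nonneg
    · exact Real.cos_nonneg_of_mem_Icc ⟨by linarith, hxle⟩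
    · exact le_of_lt (Real.sin_pos_of_pos_of_lt_pi hxpos (by linarith))
  -- u ≥ -√μ hence a := μ + √μ u ≥ 0
  have hsq : 0 ≤ Real.sqrt μ := Real.sqrt_nonneg μ
  have hu' : -Real.sqrt μ ≤ u := by
    refine le_trans ?_ hu
    rw [neg_div]
    exact neg_le_neg (div_le_self hsq (by linarith))
  have ha : 0 ≤ μ + Real.sqrt μ * u := by
    nlinarith [Real.sq_sqrt hμ.le]
  set f : ℤ → ℝ := fun k =>
    Real.cos (2 * Real.pi * k / K) *
      Real.sinh (μ * Real.cos (2 * Real.pi * k / K)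
        + Real.sqrt μ * (u * Real.cos (2 * Real.pi * k / K)
            + v * Real.sin (2 * Real.pi * k / K))) with hf
  show 0 ≤ ∑ k ∈ Finset.Icc (1 - (K : ℤ)/4) ((K : ℤ)/4), f k
  rw [hdiv]
  have hins : Finset.Icc (1 - (M:ℤ)) (M:ℤ)
      = insert (M:ℤ) (Finset.Icc (-((M:ℤ)-1)) ((M:ℤ)-1)) := by
    ext x; simp only [Finset.mem_Icc, Finset.mem_insert]; omega
  have hnotmem : (M:ℤ) ∉ Finset.Icc (-((M:ℤ)-1)) ((M:ℤ)-1) := by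
    simp only [Finset.mem_Icc]; omega
  rw [hins, Finset.sum_insert hnotmem]
  have hfM : f (M:ℤ) = 0 := by
    have h1 : 2 * Real.pi * ((M:ℕ):ℝ) / K = Real.pi / 2 := by
      rw [hKR]; field_simp; ring
    simp [hf, Int.cast_natCast, h1, Real.cos_pi_div_two]
  rw [hfM, zero_add]
  -- pairing
  have key : ∀ k ∈ Finset.Icc (-((M:ℤ)-1)) ((M:ℤ)-1), 0 ≤ f k + f (-k) := by
    intro k hk
    simp only [Finset.mem_Icc] at hk
    set θ := 2 * Real.pi * (k:ℝ) / K with hθ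
    have hkR : -((M:ℕ):ℝ) ≤ (k:ℝ) ∧ (k:ℝ) ≤ ((M:ℕ):ℝ) := by
      constructor
      · exact_mod_cast (show ((-(M:ℤ) : ℤ)) ≤ k by omega)
      · exact_mod_cast (show k ≤ ((M:ℤ)) by omega)
    have hθ1 : -(Real.pi/2) ≤ θ := by
      rw [hθ, hKR, le_div_iff₀ (by positivity)]
      nlinarith [hkR.1]
    have hθ2 : θ ≤ Real.pi/2 := by
      rw [hθ, hKR, div_le_iff₀ (by positivity)]
      nlinarith [hkR.2]
    have hcos : 0 ≤ Real.cos θ := Real.cos_nonneg_of_mem_Icc ⟨hθ1, hθ2⟩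
    have hnegθ : 2 * Real.pi * ((-k : ℤ):ℝ) / K = -θ := by
      push_cast; rw [hθ]; ring
    have harg1 : μ * Real.cos θ + Real.sqrt μ * (u * Real.cos θ + v * Real.sin θ)
        = (μ + Real.sqrt μ * u) * Real.cos θ + Real.sqrt μ * v * Real.sin θ := by ring
    have harg2 : μ * Real.cos θ + Real.sqrt μ * (u * Real.cos θ + - (v * Real.sin θ))
        = (μ + Real.sqrt μ * u) * Real.cos θ - Real.sqrt μ * v * Real.sin θ := by ring
    have hfk : f k + f (-k)
        = Real.cos θ * (2 * Real.sinh ((μ + Real.sqrt μ * u) * Real.cos θ)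
            * Real.cosh (Real.sqrt μ * v * Real.sin θ)) := by
      simp only [hf, hnegθ, Real.cos_neg, Real.sin_neg, mul_neg]
      rw [harg1, harg2, Real.sinh_add, Real.sinh_sub]
      ring
    rw [hfk]
    have hsinh : 0 ≤ Real.sinh ((μ + Real.sqrt μ * u) * Real.cos θ) :=
      Real.sinh_nonneg_iff.mpr (by positivity)
    have hcosh := (Real.cosh_pos (x := Real.sqrt μ * v * Real.sin θ)).le
    positivity
  -- sum over symmetric interval
  have hrefl : ∑ k ∈ Finset.Icc (-((M:ℤ)-1)) ((M:ℤ)-1), f (-k)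
      = ∑ k ∈ Finset.Icc (-((M:ℤ)-1)) ((M:ℤ)-1), f k := by
    apply Finset.sum_nbij' (fun k => -k) (fun k => -k)
    · intro a ha; simp only [Finset.mem_Icc] at *; omega
    · intro a ha; simp only [Finset.mem_Icc] at *; omega
    · intro a _; ring
    · intro a _; ring
    · intro a _; rfl
  have h2 : 0 ≤ ∑ k ∈ Finset.Icc (-((M:ℤ)-1)) ((M:ℤ)-1), (f k + f (-k)) :=
    Finset.sum_nonneg key
  rw [Finset.sum_add_distrib, hrefl] at h2
  linarith
end

section
/- Let K ≥ 4 be a multiple of 4, μ > 0, X > 0, and v ∈ ℝ. With cos_k = cos(2πk/K), sin_k = sin(2πk/K), and Y_k(u) = μ·cos_k + √μ·(u·cos_k + v·sin_k), the function f(u) = (Σ_{k=−K/4+1}^{K/4} 2·cos_k·sinh Y_k(u)) / (X + Σ_{a=−K/4+1}^{K/4} 2·cosh Y_a(u)) is strictly increasing on ℝ. -/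
open Finset

/-- **Strict monotonicity of the I₁ integrand as a function of `u = U₁^R`.**
For `K ≥ 4` a multiple of 4, `μ > 0`, `X > 0` and any `v ∈ ℝ`, with
`Y_k(u) = μ·cos(2πk/K) + √μ·(u·cos(2πk/K) + v·sin(2πk/K))`, the function
`u ↦ (∑_{k=−K/4+1}^{K/4} 2 cos(2πk/K) sinh Y_k(u)) / (X + ∑_{a=−K/4+1}^{K/4} 2 cosh Y_a(u))`
is strictly increasing on ℝ. -/
theorem I1_integrand_strictMono (K : ℕ) (hK : 4 ≤ K) (hK4 : 4 ∣ K)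
    (μ : ℝ) (hμ : 0 < μ) (X : ℝ) (hX : 0 < X) (v : ℝ) :
    StrictMono (fun u : ℝ =>
      (∑ k ∈ Finset.Icc (1 - (K : ℤ)/4) ((K : ℤ)/4),
          2 * Real.cos (2 * Real.pi * k / K) *
            Real.sinh (μ * Real.cos (2 * Real.pi * k / K)
              + Real.sqrt μ * (u * Real.cos (2 * Real.pi * k / K)
                  + v * Real.sin (2 * Real.pi * k / K)))) /
      (X + ∑ a ∈ Finset.Icc (1 - (K : ℤ)/4) ((K : ℤ)/4),
          2 * Real.cosh (μ * Real.cos (2 * Real.pi * a / K)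
              + Real.sqrt μ * (u * Real.cos (2 * Real.pi * a / K)
                  + v * Real.sin (2 * Real.pi * a / K))))) := by
  set s : Finset ℤ := Finset.Icc (1 - (K : ℤ)/4) ((K : ℤ)/4) with hs
  set c : ℤ → ℝ := fun k => Real.cos (2 * Real.pi * k / K) with hc
  set sn : ℤ → ℝ := fun k => Real.sin (2 * Real.pi * k / K) with hsn
  set Y : ℤ → ℝ → ℝ := fun k u => μ * c k + Real.sqrt μ * (u * c k + v * sn k) with hY
  have hsqμ : 0 < Real.sqrt μ := Real.sqrt_pos.2 hμ
  have h0s : (0 : ℤ) ∈ s := by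
    have h4 : (4 : ℤ) ≤ (K : ℤ) := by exact_mod_cast hK
    simp only [hs, Finset.mem_Icc]
    omega
  apply strictMono_of_deriv_pos
  intro u
  -- derivative of each Y k
  have hYd : ∀ k : ℤ, HasDerivAt (fun u => Y k u) (Real.sqrt μ * c k) u := by
    intro k
    have h1 : HasDerivAt (fun u : ℝ => u * c k + v * sn k) (c k) u := by
      simpa using ((hasDerivAt_id u).mul_const (c k)).add_const (v * sn k)
    have h2 := (h1.const_mul (Real.sqrt μ)).const_add (μ * c k)
    exact h2
  have hN : HasDerivAt (fun u => ∑ k ∈ s, 2 * c k * Real.sinh (Y k u))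
      (∑ k ∈ s, 2 * c k * (Real.cosh (Y k u) * (Real.sqrt μ * c k))) u := by
    apply HasDerivAt.fun_sum
    intro k _
    exact ((hYd k).sinh).const_mul _
  have hD : HasDerivAt (fun u => X + ∑ a ∈ s, 2 * Real.cosh (Y a u))
      (∑ a ∈ s, 2 * (Real.sinh (Y a u) * (Real.sqrt μ * c a))) u := by
    apply HasDerivAt.const_add
    apply HasDerivAt.fun_sum
    intro a _
    exact ((hYd a).cosh).const_mul _
  have hDpos : 0 < X + ∑ a ∈ s, 2 * Real.cosh (Y a u) := by
    have : (0:ℝ) ≤ ∑ a ∈ s, 2 * Real.cosh (Y a u) :=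
      Finset.sum_nonneg fun a _ => by positivity
    linarith
  have hf : HasDerivAt (fun u : ℝ =>
      (∑ k ∈ s, 2 * c k * Real.sinh (Y k u)) / (X + ∑ a ∈ s, 2 * Real.cosh (Y a u)))
      (((∑ k ∈ s, 2 * c k * (Real.cosh (Y k u) * (Real.sqrt μ * c k))) *
          (X + ∑ a ∈ s, 2 * Real.cosh (Y a u)) -
        (∑ k ∈ s, 2 * c k * Real.sinh (Y k u)) *
          (∑ a ∈ s, 2 * (Real.sinh (Y a u) * (Real.sqrt μ * c a)))) /
        (X + ∑ a ∈ s, 2 * Real.cosh (Y a u)) ^ 2) u := hN.div hD hDpos.ne'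
  rw [hf.deriv]
  apply div_pos _ (by positivity)
  -- abbreviations
  set P := ∑ k ∈ s, (c k) ^ 2 * Real.cosh (Y k u) with hP
  set Q := ∑ k ∈ s, c k * Real.sinh (Y k u) with hQ
  set R := ∑ k ∈ s, Real.cosh (Y k u) with hR
  have eN' : (∑ k ∈ s, 2 * c k * (Real.cosh (Y k u) * (Real.sqrt μ * c k)))
      = 2 * Real.sqrt μ * P := by
    rw [hP, Finset.mul_sum]; exact Finset.sum_congr rfl fun k _ => by ring
  have eN : (∑ k ∈ s, 2 * c k * Real.sinh (Y k u)) = 2 * Q := by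
    rw [hQ, Finset.mul_sum]; exact Finset.sum_congr rfl fun k _ => by ring
  have eD' : (∑ a ∈ s, 2 * (Real.sinh (Y a u) * (Real.sqrt μ * c a)))
      = 2 * Real.sqrt μ * Q := by
    rw [hQ, Finset.mul_sum]; exact Finset.sum_congr rfl fun k _ => by ring
  have eD : (∑ a ∈ s, 2 * Real.cosh (Y a u)) = 2 * R := by
    rw [hR, Finset.mul_sum]
  rw [eN', eN, eD', eD]
  have hPpos : 0 < P := by
    apply Finset.sum_pos' (fun k _ => by positivity)
    refine ⟨0, h0s, ?_⟩
    have : c 0 = 1 := by simp [hc]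
    rw [this]
    have := Real.cosh_pos (x := Y 0 u)
    nlinarith
  have hCS : Q ^ 2 ≤ P * R := by
    have key : Q ^ 2 ≤ P * ∑ k ∈ s, (Real.sinh (Y k u)) ^ 2 / Real.cosh (Y k u) := by
      have := Finset.sum_mul_sq_le_sq_mul_sq s
        (fun k => c k * Real.sqrt (Real.cosh (Y k u)))
        (fun k => Real.sinh (Y k u) / Real.sqrt (Real.cosh (Y k u)))
      have e1 : ∀ k : ℤ, c k * Real.sqrt (Real.cosh (Y k u)) *
          (Real.sinh (Y k u) / Real.sqrt (Real.cosh (Y k u))) = c k * Real.sinh (Y k u) := by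
        intro k
        have h := Real.cosh_pos (x := Y k u)
        have hsq : Real.sqrt (Real.cosh (Y k u)) ≠ 0 := by positivity
        field_simp
      have e2 : ∀ k : ℤ, (c k * Real.sqrt (Real.cosh (Y k u))) ^ 2
          = (c k) ^ 2 * Real.cosh (Y k u) := by
        intro k
        rw [mul_pow, Real.sq_sqrt (Real.cosh_pos (x := Y k u)).le]
      have e3 : ∀ k : ℤ, (Real.sinh (Y k u) / Real.sqrt (Real.cosh (Y k u))) ^ 2
          = (Real.sinh (Y k u)) ^ 2 / Real.cosh (Y k u) := by
        intro k
        rw [div_pow, Real.sq_sqrt (Real.cosh_pos (x := Y k u)).le]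
      calc Q ^ 2 = (∑ k ∈ s, c k * Real.sqrt (Real.cosh (Y k u)) *
            (Real.sinh (Y k u) / Real.sqrt (Real.cosh (Y k u)))) ^ 2 := by
              rw [hQ]; congr 1; exact Finset.sum_congr rfl fun k _ => (e1 k).symm
        _ ≤ (∑ k ∈ s, (c k * Real.sqrt (Real.cosh (Y k u))) ^ 2) *
            ∑ k ∈ s, (Real.sinh (Y k u) / Real.sqrt (Real.cosh (Y k u))) ^ 2 := this
        _ = P * ∑ k ∈ s, (Real.sinh (Y k u)) ^ 2 / Real.cosh (Y k u) := by
              rw [hP]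
              congr 1
              · exact Finset.sum_congr rfl fun k _ => e2 k
              · exact Finset.sum_congr rfl fun k _ => e3 k
    refine key.trans (mul_le_mul_of_nonneg_left ?_ hPpos.le)
    apply Finset.sum_le_sum
    intro k _
    have hch := Real.cosh_pos (x := Y k u)
    rw [div_le_iff₀ hch]
    have := Real.cosh_sq_sub_sinh_sq (Y k u)
    nlinarith
  nlinarith [hsqμ, hPpos, hCS, mul_pos hX hPpos, mul_pos hsqμ (mul_pos hX hPpos)]
end
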